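/- arXiv:1909.07954 — 6 statements merged into one kernel-verified Lean document; each statement's English description precedes it below -/
import Mathlib

section
/- Let q = p^s be an odd prime power, e a divisor of s with s/e = 2r, and L(X) = Σ_{i=0}^{2r-1} c_i X^{p^{ie}} a linearized polynomial over F_q. Define f(x,y) = Tr_{q/p^e}(x·L(y)). Then f is an alternating F_{p^e}-bilinear form on F_q (viewed as an F_{p^e}-vector space) if and only if c_0 = 0 and c_{2r-i}^{p^{ie}} = -c_i for all 1 ≤ i ≤ 2r-1. -/
open Finset Polynomial

private lemma padd_two {p : ℕ} (hp : 1 < p) {u v : ℕ} (h : p ^ u + p ^ v = 2) :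
    u = 0 ∧ v = 0 := by
  have hu : 1 ≤ p ^ u := Nat.one_le_pow _ _ (by omega)
  have hv : 1 ≤ p ^ v := Nat.one_le_pow _ _ (by omega)
  have hu1 : p ^ u = 1 := by omega
  have hv1 : p ^ v = 1 := by omega
  have key : ∀ w : ℕ, p ^ w = 1 → w = 0 := by
    intro w hw
    by_contra hne
    have := Nat.le_self_pow hne p
    omega
  exact ⟨key u hu1, key v hv1⟩

private lemma padd_one {p : ℕ} (hp : 1 < p) {u v w : ℕ} (hw : 0 < w)
    (h : p ^ u + p ^ v = 1 + p ^ w) : (u = 0 ∧ v = w) ∨ (v = 0 ∧ u = w) := by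
  have hinj := Nat.pow_right_injective hp
  rcases Nat.eq_zero_or_pos u with hu | hu
  · left
    subst hu
    simp only [pow_zero] at h
    exact ⟨rfl, hinj (show p ^ v = p ^ w by omega)⟩
  rcases Nat.eq_zero_or_pos v with hv | hv
  · right
    subst hv
    simp only [pow_zero] at h
    exact ⟨rfl, hinj (show p ^ u = p ^ w by omega)⟩
  · exfalso
    have h1 : p ∣ p ^ u := dvd_pow_self p hu.ne'
    have h2 : p ∣ p ^ v := dvd_pow_self p hv.ne'
    have h3 : p ∣ p ^ w := dvd_pow_self p hw.ne'
    have h4 : p ∣ p ^ w + 1 := by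
      have : p ^ w + 1 = p ^ u + p ^ v := by omega
      rw [this]; exact dvd_add h1 h2
    have h5 : p ∣ 1 := (Nat.dvd_add_right h3).mp h4
    exact absurd (Nat.le_of_dvd one_pos h5) (by omega)

private lemma mod_helper {m i j : ℕ} (hi : i < m) (hj : j < m) :
    (i + j) % m = i + j ∨ (i + j) % m + m = i + j := by
  rcases Nat.lt_or_ge (i + j) m with h | h
  · left; exact Nat.mod_eq_of_lt h
  · right
    rw [Nat.mod_eq_sub_mod h, Nat.mod_eq_of_lt (by omega)]
    omega

private lemma sum_two {ι M : Type*} [AddCommMonoid M] [DecidableEq ι] {s : Finset ι} {f : ι → M}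
    {a b : ι} (ha : a ∈ s) (hb : b ∈ s) (hab : a ≠ b)
    (h0 : ∀ x ∈ s, x ≠ a → x ≠ b → f x = 0) : ∑ x ∈ s, f x = f a + f b := by
  rw [← Finset.sum_subset (s₁ := {a, b}) (by
        intro x hx
        simp only [Finset.mem_insert, Finset.mem_singleton] at hx
        rcases hx with rfl | rfl <;> assumption)
      (fun x hx hx' => h0 x hx (by simp at hx'; tauto) (by simp at hx'; tauto))]
  exact Finset.sum_pair hab

/-- Let `q = p^s` be an odd prime power, `e ∣ s` with `s/e = 2r`, and
`L(X) = Σ_{i=0}^{2r-1} c_i X^{p^{ie}}` a linearized polynomial over `F_q`.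
Define `f(x,y) = Tr_{q/p^e}(x·L(y))`, where `Tr_{q/p^e}(z) = Σ_{j=0}^{2r-1} z^{p^{je}}`.
Then `f` is an alternating form (i.e. `f(x,x) = 0` for all `x`; it is automatically
`F_{p^e}`-bilinear) if and only if `c_0 = 0` and `c_{2r-i}^{p^{ie}} = -c_i` for
all `1 ≤ i ≤ 2r-1`. -/
theorem statement_0 (p s e r : ℕ) (hp : p.Prime) (hpodd : Odd p)
    (hr : 0 < r) (he : 0 < e) (hs : s = 2 * r * e)
    (F : Type*) [Field F] [Fintype F] (hF : Fintype.card F = p ^ s)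
    (c : ℕ → F)
    (L : F → F) (hL : ∀ x, L x = ∑ i ∈ Finset.range (2 * r), c i * x ^ p ^ (i * e))
    (Tr : F → F) (hTr : ∀ z, Tr z = ∑ j ∈ Finset.range (2 * r), z ^ p ^ (j * e))
    (f : F → F → F) (hf : ∀ x y, f x y = Tr (x * L y)) :
    (∀ x, f x x = 0) ↔
      (c 0 = 0 ∧ ∀ i, 1 ≤ i → i ≤ 2 * r - 1 → c (2 * r - i) ^ p ^ (i * e) = - c i) := by
  classical
  set m := 2 * r with hm
  have hm0 : 0 < m := by omega
  have hp1 : 1 < p := hp.one_lt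
  have hp3 : 3 ≤ p := by
    rcases hpodd with ⟨k, hk⟩
    omega
  -- characteristic of F is p
  obtain ⟨p', hp'⟩ := CharP.exists F
  haveI := hp'
  obtain ⟨n, hpprime, hcard⟩ := FiniteField.card F p'
  have hpp : p' = p := by
    have hd : p ∣ p' ^ (n : ℕ) := by
      rw [← hcard, hF, hs]
      exact dvd_pow_self p (by positivity)
    have := hp.dvd_of_dvd_pow hd
    exact ((Nat.prime_dvd_prime_iff_eq hp hpprime).mp this).symm
  haveI : CharP F p := hpp ▸ hp'
  haveI : Fact p.Prime := ⟨hp⟩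
  haveI : ExpChar F p := ExpChar.prime hp
  -- basic power reductions
  have hq : ∀ x : F, x ^ p ^ (m * e) = x := by
    intro x
    have hcF : p ^ (m * e) = Fintype.card F := by rw [hF, hs, hm]
    rw [hcF]
    exact FiniteField.pow_card x
  have haux : ∀ (x : F) (t k : ℕ), x ^ p ^ (m * e * t + k) = x ^ p ^ k := by
    intro x t
    induction t with
    | zero => simp
    | succ t ih =>
      intro k
      have h1 : m * e * (t + 1) + k = (m * e * t + k) + m * e := by ring
      rw [h1, pow_add, mul_comm, pow_mul, hq, ih]
  have hred : ∀ (x : F) (k : ℕ), x ^ p ^ (k * e) = x ^ p ^ (k % m * e) := by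
    intro x k
    have h1 : k * e = m * e * (k / m) + k % m * e := by
      conv_lhs => rw [← Nat.div_add_mod k m]
      ring
    rw [h1, haux]
  -- expansion of f x x
  have hterm : ∀ (x : F) (j i : ℕ),
      (c i * x ^ p ^ (i * e)) ^ p ^ (j * e) * x ^ p ^ (j * e)
        = c i ^ p ^ (j * e) * x ^ (p ^ (j * e) + p ^ ((i + j) % m * e)) := by
    intro x j i
    rw [mul_pow, ← pow_mul, ← pow_add]
    have h1 : i * e + j * e = (i + j) * e := by ring
    rw [h1, hred x (i + j), pow_add]
    ring
  have hexp : ∀ x : F, f x x = ∑ q ∈ range m ×ˢ range m,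
      c q.2 ^ p ^ (q.1 * e) * x ^ (p ^ (q.1 * e) + p ^ ((q.2 + q.1) % m * e)) := by
    intro x
    rw [hf, hTr, Finset.sum_product]
    refine Finset.sum_congr rfl fun j hj => ?_
    rw [hL x, mul_pow, sum_pow_char_pow, Finset.mul_sum]
    refine Finset.sum_congr rfl fun i hi => ?_
    rw [mul_comm (x ^ p ^ (j * e)), hterm x j i]
  constructor
  · -- forward direction
    intro halt
    set P : F[X] := ∑ q ∈ range m ×ˢ range m,
      Polynomial.monomial (p ^ (q.1 * e) + p ^ ((q.2 + q.1) % m * e)) (c q.2 ^ p ^ (q.1 * e))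
      with hPdef
    have heval : ∀ x : F, P.eval x = 0 := by
      intro x
      rw [hPdef, Polynomial.eval_finset_sum]
      simp only [Polynomial.eval_monomial]
      rw [← hexp x]
      exact halt x
    have hdeg : P.natDegree < Fintype.card F := by
      have hA : 1 ≤ p ^ ((m - 1) * e) := Nat.one_le_pow _ _ (by omega)
      have hbound : 2 * p ^ ((m - 1) * e) < Fintype.card F := by
        rw [hF, hs]
        have h1 : m * e = (m - 1) * e + e := by
          have h0 : m - 1 + 1 = m := Nat.succ_pred_eq_of_pos hm0
          calc m * e = (m - 1 + 1) * e := by rw [h0]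
            _ = (m - 1) * e + e := by ring
        rw [h1, pow_add]
        have h2 : 3 ≤ p ^ e := le_trans hp3 (Nat.le_self_pow he.ne' p)
        calc 2 * p ^ ((m - 1) * e) < 3 * p ^ ((m - 1) * e) := by omega
          _ ≤ p ^ ((m - 1) * e) * p ^ e := by
              rw [mul_comm]
              exact Nat.mul_le_mul_left _ h2
      refine lt_of_le_of_lt ?_ hbound
      apply Polynomial.natDegree_sum_le_of_forall_le
      intro q hq'
      refine le_trans (Polynomial.natDegree_monomial_le _) ?_
      simp only [Finset.mem_product, Finset.mem_range] at hq'
      have h1 : q.1 * e ≤ (m - 1) * e := Nat.mul_le_mul_right _ (by omega)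
      have h2 : (q.2 + q.1) % m * e ≤ (m - 1) * e :=
        Nat.mul_le_mul_right _ (by have := Nat.mod_lt (q.2 + q.1) hm0; omega)
      have h3 := Nat.pow_le_pow_right (le_of_lt hp1) h1
      have h4 := Nat.pow_le_pow_right (le_of_lt hp1) h2
      omega
    have hP0 : P = 0 :=
      Polynomial.eq_zero_of_natDegree_lt_card_of_eval_eq_zero' P Finset.univ
        (fun x _ => heval x) (by rwa [Finset.card_univ])
    have hcoeff : ∀ k, (∑ q ∈ range m ×ˢ range m,
        if p ^ (q.1 * e) + p ^ ((q.2 + q.1) % m * e) = k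
        then c q.2 ^ p ^ (q.1 * e) else 0) = 0 := by
      intro k
      have h1 : P.coeff k = 0 := by rw [hP0]; simp
      rw [hPdef, Polynomial.finset_sum_coeff] at h1
      rw [Finset.sum_congr rfl (fun q _ => (Polynomial.coeff_monomial (m := k)
        (a := c q.2 ^ p ^ (q.1 * e))))] at h1
      exact h1
    have hc0 : c 0 = 0 := by
      have h2 := hcoeff 2
      rw [Finset.sum_eq_single ((0, 0) : ℕ × ℕ)] at h2
      · simpa using h2
      · rintro ⟨j, i⟩ hq' hne
        simp only [Finset.mem_product, Finset.mem_range] at hq'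
        rw [if_neg]
        intro hcond
        dsimp only at hcond
        obtain ⟨h1, h2'⟩ := padd_two hp1 hcond
        have hj0 : j = 0 := by
          rcases Nat.mul_eq_zero.mp h1 with h | h <;> omega
        have hb0 : (i + j) % m = 0 := by
          rcases Nat.mul_eq_zero.mp h2' with h | h <;> omega
        subst hj0
        have hi0 : i = 0 := by
          rcases mod_helper (show i < m from hq'.2) (show 0 < m from hm0) with h | h <;> omega
        exact hne (by simp [hi0])
      · intro h
        exact absurd (by simp [Finset.mem_product, hm0] : ((0,0) : ℕ × ℕ) ∈ range m ×ˢ range m) h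
    refine ⟨hc0, ?_⟩
    intro i hi1 hi2
    have him : i < m := by omega
    have hie : 0 < i * e := Nat.mul_pos (by omega) he
    have hkey := hcoeff (1 + p ^ (i * e))
    rw [sum_two (a := ((0 : ℕ), i)) (b := (i, m - i))
        (by simp [Finset.mem_product, hm0, him])
        (by simp only [Finset.mem_product, Finset.mem_range]; omega)
        (by intro h; rw [Prod.ext_iff] at h; omega)] at hkey
    · -- evaluate the two terms
      have ht1 : ((i : ℕ) + 0) % m = i := by rw [Nat.add_zero, Nat.mod_eq_of_lt him]
      have ht2 : (m - i + i) % m = 0 := by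
        have : m - i + i = m := by omega
        rw [this, Nat.mod_self]
      rw [if_pos, if_pos] at hkey
      · simp only [Nat.zero_mul, pow_zero, pow_one] at hkey
        have : c (m - i) ^ p ^ (i * e) = - c i := by linear_combination hkey
        exact this
      · rw [ht2]; simp [Nat.add_comm]
      · rw [ht1]; simp
    · rintro ⟨j, i'⟩ hq' hne1 hne2
      simp only [Finset.mem_product, Finset.mem_range] at hq'
      rw [if_neg]
      intro hcond
      dsimp only at hcond
      rcases padd_one hp1 hie hcond with ⟨h1, h2⟩ | ⟨h1, h2⟩
      · have hj0 : j = 0 := by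
          rcases Nat.mul_eq_zero.mp h1 with h | h <;> omega
        have hb : (i' + j) % m = i := Nat.eq_of_mul_eq_mul_right he h2
        subst hj0
        have : i' = i := by
          rcases mod_helper (show i' < m from hq'.2) hm0 with h | h <;> omega
        exact hne1 (by simp [this])
      · have hji : j = i := Nat.eq_of_mul_eq_mul_right he h2
        have hb : (i' + j) % m = 0 := by
          rcases Nat.mul_eq_zero.mp h1 with h | h <;> omega
        have hmi : i' = m - i := by
          rcases mod_helper (show i' < m from hq'.2) (show j < m from hq'.1) with h | h <;> omega
        exact hne2 (by rw [Prod.ext_iff]; exact ⟨hji, hmi⟩)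
  · -- backward direction
    rintro ⟨hc0, hrel⟩ x
    rw [hexp x]
    rw [← Finset.sum_filter_of_ne (p := fun q => q.2 ≠ 0) (by
      rintro ⟨j, i⟩ hq' hne
      intro hi0
      apply hne
      subst hi0
      rw [hc0, zero_pow (by positivity), zero_mul])]
    have hkey2 : ∀ i j, 1 ≤ i → i < m →
        c (m - i) ^ p ^ ((i + j) % m * e) = -(c i ^ p ^ (j * e)) := by
      intro i j hi1 hi2
      have h1 : c (m - i) ^ p ^ (i * e) = - c i := hrel i hi1 (by omega)
      have h2 := congrArg (fun z => z ^ p ^ (j * e)) h1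
      rw [← pow_mul, ← pow_add] at h2
      have h3 : i * e + j * e = (i + j) * e := by ring
      rw [h3, hred (c (m - i)) (i + j)] at h2
      rw [h2, Odd.neg_pow (Odd.pow hpodd)]
    refine Finset.sum_involution (fun q _ => ((q.2 + q.1) % m, m - q.2)) ?_ ?_ ?_ ?_
    · rintro ⟨j, i⟩ ha
      simp only [Finset.mem_filter, Finset.mem_product, Finset.mem_range] at ha
      obtain ⟨⟨hj, hi⟩, hi0⟩ := ha
      have hi1 : 1 ≤ i := Nat.one_le_iff_ne_zero.mpr hi0
      dsimp only
      have hb : (i + j) % m < m := Nat.mod_lt _ hm0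
      have hback : (m - i + (i + j) % m) % m = j := by
        have h5 : (m - i + (i + j) % m) % m < m := Nat.mod_lt _ hm0
        rcases mod_helper hi hj with h | h <;>
          rcases mod_helper (show m - i < m by omega) hb with h' | h' <;> omega
      rw [hback, hkey2 i j hi1 hi]
      ring
    · rintro ⟨j, i⟩ ha hne
      simp only [Finset.mem_filter, Finset.mem_product, Finset.mem_range] at ha
      obtain ⟨⟨hj, hi⟩, hi0⟩ := ha
      intro heq
      rw [Prod.ext_iff] at heq
      dsimp only at heq
      obtain ⟨h1, h2⟩ := heq
      have hi1 : 1 ≤ i := Nat.one_le_iff_ne_zero.mpr hi0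
      rcases mod_helper hi hj with h | h <;> omega
    · rintro ⟨j, i⟩ ha
      simp only [Finset.mem_filter, Finset.mem_product, Finset.mem_range] at ha ⊢
      obtain ⟨⟨hj, hi⟩, hi0⟩ := ha
      exact ⟨⟨Nat.mod_lt _ hm0, by omega⟩, by omega⟩
    · rintro ⟨j, i⟩ ha
      simp only [Finset.mem_filter, Finset.mem_product, Finset.mem_range] at ha
      obtain ⟨⟨hj, hi⟩, hi0⟩ := ha
      have hi1 : 1 ≤ i := Nat.one_le_iff_ne_zero.mpr hi0
      have hb : (i + j) % m < m := Nat.mod_lt _ hm0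
      have hback : (m - i + (i + j) % m) % m = j := by
        have h5 : (m - i + (i + j) % m) % m < m := Nat.mod_lt _ hm0
        rcases mod_helper hi hj with h | h <;>
          rcases mod_helper (show m - i < m by omega) hb with h' | h' <;> omega
      rw [Prod.ext_iff]
      dsimp only
      exact ⟨hback, by omega⟩
end

section
/- Let q be an odd prime power which is a perfect square, and suppose q = p^{2er} with r ≥ 2. Let γ be a primitive element of F_q, δ = γ^{(√q+1)/2}, and L(X) = δ X^{√q}. Then f(x,y) = Tr_{q/p^e}(x·L(y)) is a non-degenerate alternating F_{p^e}-bilinear form on F_q viewed as a 2r-dimensional F_{p^e}-vector space. -/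
/-- Let `q = p^{2er}` be an odd prime power (a perfect square), `r ≥ 2`, `γ` a primitive
element of `F_q`, `δ = γ^{(√q+1)/2}` where `√q = p^{er}`, and `L(X) = δ X^{√q}`.
Then `f(x,y) = Tr_{q/p^e}(x·L(y))` is a non-degenerate alternating
`F_{p^e}`-bilinear form on `F_q` viewed as a `2r`-dimensional `F_{p^e}`-vector space;
here `Tr_{q/p^e}(z) = Σ_{j<2r} z^{p^{je}}`, its values are fixed by the `p^e`-power
Frobenius (i.e. lie in `F_{p^e}`), alternating means `f(x,x) = 0` for all `x`, and
`F_{p^e}`-bilinearity is expressed by additivity in each variable together with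
homogeneity with respect to elements fixed by the `p^e`-power Frobenius. -/
theorem statement_3 (p e r : ℕ) (hp : p.Prime) (hpodd : Odd p)
    (he : 0 < e) (hr : 2 ≤ r)
    (F : Type*) [Field F] [Fintype F] (hF : Fintype.card F = p ^ (2 * e * r))
    (γ : F) (hγ : orderOf γ = Fintype.card F - 1)
    (δ : F) (hδ : δ = γ ^ ((p ^ (e * r) + 1) / 2))
    (Tr : F → F) (hTr : ∀ z, Tr z = ∑ j ∈ Finset.range (2 * r), z ^ p ^ (j * e))
    (f : F → F → F) (hf : ∀ x y, f x y = Tr (x * (δ * y ^ p ^ (e * r)))) :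
    (∀ x y, (f x y) ^ p ^ e = f x y) ∧
    (∀ x₁ x₂ y, f (x₁ + x₂) y = f x₁ y + f x₂ y) ∧
    (∀ x y₁ y₂, f x (y₁ + y₂) = f x y₁ + f x y₂) ∧
    (∀ θ x y, θ ^ p ^ e = θ → f (θ * x) y = θ * f x y ∧ f x (θ * y) = θ * f x y) ∧
    (∀ x, f x x = 0) ∧
    (∀ y, (∀ x, f x y = 0) → y = 0) := by
  haveI : Fact p.Prime := ⟨hp⟩
  have hp1 : 1 < p := hp.one_lt
  have h2er : 0 < 2 * e * r := by positivity
  -- characteristic p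
  have hchar : CharP F p := by
    obtain ⟨c, hc⟩ := CharP.exists F
    haveI := hc
    obtain ⟨n, hcp, hn⟩ := FiniteField.card F c
    have hdvd : p ∣ c ^ (n : ℕ) := by
      rw [← hn, hF]
      exact dvd_pow_self p h2er.ne'
    have hpc : p = c := (Nat.prime_dvd_prime_iff_eq hp hcp).1 (hp.dvd_of_dvd_pow hdvd)
    rwa [hpc]
  haveI := hchar
  -- basic conveniences
  have hq : ∀ z : F, z ^ p ^ (2 * e * r) = z := fun z => by
    rw [← hF]; exact FiniteField.pow_card z
  have hfrob : ∀ (a b : F) (k : ℕ), (a + b) ^ p ^ k = a ^ p ^ k + b ^ p ^ k :=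
    fun a b k => add_pow_char_pow a b p k
  -- Tr is additive
  have hTradd : ∀ a b, Tr (a + b) = Tr a + Tr b := by
    intro a b
    simp only [hTr]
    rw [← Finset.sum_add_distrib]
    exact Finset.sum_congr rfl fun j _ => hfrob a b (j * e)
  -- elements fixed by p^e-Frobenius are fixed by all p^(je)-Frobenius
  have hθfix : ∀ θ : F, θ ^ p ^ e = θ → ∀ j, θ ^ p ^ (j * e) = θ := by
    intro θ hθ j
    induction j with
    | zero => simp
    | succ n ih =>
      have h1 : (n + 1) * e = n * e + e := by ring
      rw [h1, pow_add, pow_mul, ih, hθ]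
  -- Tr is F_{p^e}-homogeneous
  have hTrsmul : ∀ (θ : F), θ ^ p ^ e = θ → ∀ w, Tr (θ * w) = θ * Tr w := by
    intro θ hθ w
    simp only [hTr, Finset.mul_sum]
    exact Finset.sum_congr rfl fun j _ => by rw [mul_pow, hθfix θ hθ j]
  -- Tr values are fixed by Frobenius
  have trfix : ∀ z, (Tr z) ^ p ^ e = Tr z := by
    intro z
    rw [hTr]
    have hsum_pow : (∑ j ∈ Finset.range (2 * r), z ^ p ^ (j * e)) ^ p ^ e
        = ∑ j ∈ Finset.range (2 * r), (z ^ p ^ (j * e)) ^ p ^ e := by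
      haveI : ExpChar F p := ExpChar.prime hp
      have h0 := map_sum (iterateFrobenius F p e) (fun j => z ^ p ^ (j * e))
        (Finset.range (2 * r))
      simp only [iterateFrobenius_def] at h0
      exact h0
    rw [hsum_pow]
    have hstep : ∀ j, (z ^ p ^ (j * e)) ^ p ^ e = z ^ p ^ ((j + 1) * e) := by
      intro j
      rw [← pow_mul, ← pow_add]
      congr 1
      ring
    rw [Finset.sum_congr rfl fun j _ => hstep j]
    have h1 := Finset.sum_range_succ' (fun j => z ^ p ^ (j * e)) (2 * r)
    have h2 := Finset.sum_range_succ (fun j => z ^ p ^ (j * e)) (2 * r)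
    have h3 : z ^ p ^ (2 * r * e) = z := by
      have : 2 * r * e = 2 * e * r := by ring
      rw [this]; exact hq z
    simp only [zero_mul, pow_zero, pow_one] at h1
    rw [h3] at h2
    -- h1 : ∑_{i<2r+1} f i = ∑_{i<2r} f (i+1) + z ; h2 : ∑_{i<2r+1} f i = ∑_{i<2r} f i + z
    have := h1.symm.trans h2
    exact add_right_cancel this
  -- primitive element is nonzero
  have hcard2 : 2 ≤ p ^ (2 * e * r) := le_trans hp.two_le (Nat.le_self_pow h2er.ne' p)
  have hp3 : 3 ≤ p := by
    rcases hp.eq_two_or_odd' with h | h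
    · exact absurd (h ▸ hpodd) (by decide)
    · obtain ⟨m, hm⟩ := h
      have := hp.two_le
      omega
  have hcard3 : 3 ≤ p ^ (2 * e * r) := le_trans hp3 (Nat.le_self_pow h2er.ne' p)
  have hγ0 : γ ≠ 0 := by
    intro h
    have h1 := pow_orderOf_eq_one γ
    rw [hγ, hF, h, zero_pow (Nat.sub_ne_zero_of_lt (lt_of_lt_of_le one_lt_two hcard2))] at h1
    exact zero_ne_one h1
  -- key: γ^((q-1)/2) = -1
  obtain ⟨k, hk⟩ : Odd (p ^ (e * r)) := hpodd.pow
  have hq2 : p ^ (2 * e * r) = p ^ (e * r) * p ^ (e * r) := by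
    rw [← pow_add]; congr 1; ring
  have hord : orderOf γ = p ^ (2 * e * r) - 1 := by rw [hγ, hF]
  have hm1 : γ ^ ((p ^ (2 * e * r) - 1) / 2) = -1 := by
    set x := γ ^ ((p ^ (2 * e * r) - 1) / 2) with hx
    have hx2 : x ^ 2 = 1 := by
      rw [hx, ← pow_mul]
      have hdiv : (p ^ (2 * e * r) - 1) / 2 * 2 = p ^ (2 * e * r) - 1 := by
        rw [hq2, hk]
        have h4 : (2 * k + 1) * (2 * k + 1) = 2 * (2 * (k * k) + 2 * k) + 1 := by ring
        rw [h4]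
        generalize k * k = K
        omega
      rw [hdiv, ← hord]
      exact pow_orderOf_eq_one γ
    have hx1 : x ≠ 1 := by
      intro h
      have hdvd := orderOf_dvd_of_pow_eq_one (hx ▸ h : γ ^ ((p ^ (2 * e * r) - 1) / 2) = 1)
      rw [hord] at hdvd
      have hle := Nat.le_of_dvd (by omega) hdvd
      omega
    have hfac : (x - 1) * (x + 1) = 0 := by
      have h5 : (x - 1) * (x + 1) = x ^ 2 - 1 := by ring
      rw [h5, hx2, sub_self]
    rcases mul_eq_zero.1 hfac with h | h
    · exact absurd (sub_eq_zero.1 h) hx1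
    · exact eq_neg_of_add_eq_zero_left h
  -- δ^(√q) = -δ
  have hδs : δ ^ p ^ (e * r) = -δ := by
    have hexp : (p ^ (e * r) + 1) / 2 * p ^ (e * r)
        = (p ^ (2 * e * r) - 1) / 2 + (p ^ (e * r) + 1) / 2 := by
      rw [hq2, hk]
      have h4 : (2 * k + 1) * (2 * k + 1) = 4 * (k * k) + 4 * k + 1 := by ring
      rw [h4]
      have h5 : (2 * k + 1 + 1) / 2 = k + 1 := by omega
      rw [h5]
      have h7 : (k + 1) * (2 * k + 1) = 2 * (k * k) + 3 * k + 1 := by ring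
      rw [h7]
      generalize k * k = K
      omega
    calc δ ^ p ^ (e * r) = γ ^ ((p ^ (e * r) + 1) / 2 * p ^ (e * r)) := by
          rw [hδ, ← pow_mul]
      _ = γ ^ ((p ^ (2 * e * r) - 1) / 2) * γ ^ ((p ^ (e * r) + 1) / 2) := by
          rw [hexp, pow_add]
      _ = -δ := by rw [hm1, hδ]; ring
  -- Tr is not identically zero
  have hTrnz : ∃ z : F, Tr z ≠ 0 := by
    by_contra hcon
    push_neg at hcon
    classical
    set P : Polynomial F :=
      ∑ j ∈ Finset.range (2 * r), (Polynomial.X : Polynomial F) ^ p ^ (j * e) with hP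
    have hcoeff : P.coeff (p ^ ((2 * r - 1) * e)) = 1 := by
      rw [hP, Polynomial.finset_sum_coeff]
      rw [Finset.sum_eq_single (2 * r - 1)]
      · simp [Polynomial.coeff_X_pow]
      · intro j hj hne
        rw [Polynomial.coeff_X_pow, if_neg]
        intro heq
        have h11 : (2 * r - 1) * e = j * e := Nat.pow_right_injective hp.two_le (by simpa using heq)
        exact hne (Nat.eq_of_mul_eq_mul_right he h11).symm
      · intro h
        exact absurd (Finset.mem_range.2 (by omega)) h
    have hPne : P ≠ 0 := fun h => by simp [h] at hcoeff
    have hdeg : P.natDegree ≤ p ^ ((2 * r - 1) * e) := by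
      rw [hP]
      apply Polynomial.natDegree_sum_le_of_forall_le
      intro j hj
      have hj' := Finset.mem_range.1 hj
      rw [Polynomial.natDegree_X_pow]
      exact Nat.pow_le_pow_right hp.one_le
        (Nat.mul_le_mul_right e (by omega : j ≤ 2 * r - 1))
    have hroots : ∀ z : F, z ∈ P.roots := by
      intro z
      rw [Polynomial.mem_roots hPne]
      show Polynomial.eval z P = 0
      rw [hP]
      simp only [Polynomial.eval_finset_sum, Polynomial.eval_pow, Polynomial.eval_X]
      rw [← hTr z]
      exact hcon z
    have hsub : (Finset.univ : Finset F) ⊆ P.roots.toFinset :=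
      fun z _ => Multiset.mem_toFinset.2 (hroots z)
    have hle : Fintype.card F ≤ p ^ ((2 * r - 1) * e) :=
      le_trans (le_trans (Finset.card_le_card hsub)
        (le_trans (Multiset.toFinset_card_le _) (Polynomial.card_roots' P))) hdeg
    rw [hF] at hle
    have hlt : p ^ ((2 * r - 1) * e) < p ^ (2 * e * r) := by
      apply Nat.pow_lt_pow_right hp1
      have : 2 * e * r = 2 * r * e := by ring
      rw [this]
      have h2r : 2 * r - 1 < 2 * r := by omega
      exact (Nat.mul_lt_mul_right he).2 h2r
    omega
  refine ⟨?_, ?_, ?_, ?_, ?_, ?_⟩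
  · intro x y
    rw [hf]
    exact trfix _
  · intro x₁ x₂ y
    simp only [hf]
    rw [add_mul, hTradd]
  · intro x y₁ y₂
    simp only [hf]
    rw [hfrob y₁ y₂ (e * r)]
    rw [show x * (δ * (y₁ ^ p ^ (e * r) + y₂ ^ p ^ (e * r)))
        = x * (δ * y₁ ^ p ^ (e * r)) + x * (δ * y₂ ^ p ^ (e * r)) by ring]
    exact hTradd _ _
  · intro θ x y hθ
    constructor
    · simp only [hf]
      rw [show θ * x * (δ * y ^ p ^ (e * r)) = θ * (x * (δ * y ^ p ^ (e * r))) by ring]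
      exact hTrsmul θ hθ _
    · simp only [hf]
      have hθy : (θ * y) ^ p ^ (e * r) = θ * y ^ p ^ (e * r) := by
        rw [mul_pow]
        congr 1
        have : e * r = r * e := by ring
        rw [this]
        exact hθfix θ hθ r
      rw [hθy,
        show x * (δ * (θ * y ^ p ^ (e * r))) = θ * (x * (δ * y ^ p ^ (e * r))) by ring]
      exact hTrsmul θ hθ _
  · -- alternating
    intro x
    rw [hf, hTr]
    set u := x * (δ * x ^ p ^ (e * r)) with hu
    have hxq : (x ^ p ^ (e * r)) ^ p ^ (e * r) = x := by
      rw [← pow_mul, ← pow_add]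
      have h8 : e * r + e * r = 2 * e * r := by ring
      rw [h8]
      exact hq x
    have hus : u ^ p ^ (e * r) = -u := by
      rw [hu, mul_pow, mul_pow, hδs, hxq]
      ring
    have h2r : 2 * r = r + r := by ring
    rw [h2r, Finset.sum_range_add]
    have hpair : ∀ j, u ^ p ^ ((r + j) * e) = -(u ^ p ^ (j * e)) := by
      intro j
      have h9 : (r + j) * e = e * r + j * e := by ring
      rw [h9, pow_add, pow_mul, hus]
      exact Odd.neg_pow hpodd.pow u
    rw [Finset.sum_congr rfl fun j _ => hpair j]
    have hns : ∑ j ∈ Finset.range r, -(u ^ p ^ (j * e))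
        = -∑ j ∈ Finset.range r, u ^ p ^ (j * e) := by simp
    rw [hns]
    ring
  · -- nondegenerate
    intro y hy
    by_contra hyne
    obtain ⟨z, hz⟩ := hTrnz
    have hδ0 : δ ≠ 0 := by
      rw [hδ]
      exact pow_ne_zero _ hγ0
    have hc : δ * y ^ p ^ (e * r) ≠ 0 := mul_ne_zero hδ0 (pow_ne_zero _ hyne)
    have h10 := hy (z * (δ * y ^ p ^ (e * r))⁻¹)
    rw [hf] at h10
    rw [show z * (δ * y ^ p ^ (e * r))⁻¹ * (δ * y ^ p ^ (e * r))
        = z * ((δ * y ^ p ^ (e * r))⁻¹ * (δ * y ^ p ^ (e * r))) by ring,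
      inv_mul_cancel₀ hc, mul_one] at h10
    exact hz h10
end

section
/- Let V be a 2r-dimensional symplectic space over F_{p^e} with polar space W(2r-1,p^e), and let M be a set of projective points. Then M is an m-ovoid (every maximal totally isotropic subspace meets M in exactly m points) if and only if for every projective point P: |P^⊥ ∩ M| = m(p^{e(r-1)}+1) - p^{e(r-1)} when P ∈ M, and |P^⊥ ∩ M| = m(p^{e(r-1)}+1) when P ∉ M. -/
open Module

section Aux
open Finset
set_option linter.unusedSectionVars false
set_option maxHeartbeats 1000000

section DC
/-- generic double counting -/
lemma double_count {α β : Type*} (s : Finset α) (t : Finset β) (R : α → β → Prop)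
    [∀ a b, Decidable (R a b)] :
    ∑ a ∈ s, (t.filter (fun b => R a b)).card = ∑ b ∈ t, (s.filter (fun a => R a b)).card := by
  simp only [Finset.card_filter]
  exact Finset.sum_comm
end DC

variable {K V : Type*} [Field K] [Fintype K] [AddCommGroup V] [Module K V] [FiniteDimensional K V]

lemma gen_of_finrank_one {P : Submodule K V} (h : finrank K P = 1) :
    ∃ v : V, v ≠ 0 ∧ P = Submodule.span K {v} := by
  obtain ⟨⟨v, hvP⟩, hv0, -⟩ := finrank_eq_one_iff'.mp h
  refine ⟨v, by simpa using hv0, ?_⟩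
  have h1 : Submodule.span K {v} ≤ P := by
    simpa [Submodule.span_le] using hvP
  refine (Submodule.eq_of_le_of_finrank_le h1 ?_).symm
  rw [h, finrank_span_singleton (by simpa using hv0)]

def pts (W : Submodule K V) : Set (Submodule K V) := {P | finrank K P = 1 ∧ P ≤ W}

lemma pts_finite (W : Submodule K V) : (pts W).Finite := by
  haveI : Finite V := Module.finite_of_finite K
  haveI : Finite (Submodule K V) :=
    Finite.of_injective (fun S : Submodule K V => (S : Set V)) SetLike.coe_injective
  exact Set.toFinite _

lemma pts_mono {S W : Submodule K V} (h : S ≤ W) : pts S ⊆ pts W :=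
  fun P hP => ⟨hP.1, hP.2.trans h⟩

lemma card_pts (W : Submodule K V) :
    (pts W).ncard * (Fintype.card K - 1) = Fintype.card K ^ finrank K W - 1 := by
  classical
  haveI : Finite V := Module.finite_of_finite K
  haveI : Fintype V := Fintype.ofFinite V
  haveI : Fintype (Submodule K V) := Fintype.ofFinite _
  set s : Finset V := Set.toFinset ((W : Set V) \ {0}) with hs
  set t : Finset (Submodule K V) := Set.toFinset (pts W) with ht
  have hmap : ∀ x ∈ s, Submodule.span K {x} ∈ t := by
    intro x hx
    rw [hs, Set.mem_toFinset] at hx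
    obtain ⟨hxW, hx0⟩ := hx
    rw [ht, Set.mem_toFinset]
    exact ⟨finrank_span_singleton hx0, by simpa [Submodule.span_le] using hxW⟩
  have hcount := Finset.card_eq_sum_card_fiberwise hmap
  have hfiber : ∀ P ∈ t, (s.filter (fun x => Submodule.span K {x} = P)).card
      = Fintype.card K - 1 := by
    intro P hP
    rw [ht, Set.mem_toFinset] at hP
    obtain ⟨v, hv0, rfl⟩ := gen_of_finrank_one hP.1
    have himg : s.filter (fun x => Submodule.span K {x} = Submodule.span K {v})
        = (Finset.univ.erase (0 : K)).image (fun c => c • v) := by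
      ext x
      simp only [Finset.mem_filter, Finset.mem_image, Finset.mem_erase, Finset.mem_univ,
        and_true, hs, Set.mem_toFinset, Set.mem_diff, Set.mem_singleton_iff]
      constructor
      · rintro ⟨⟨hxW, hx0⟩, hsp⟩
        have : x ∈ Submodule.span K {v} := hsp ▸ Submodule.mem_span_singleton_self x
        obtain ⟨c, rfl⟩ := Submodule.mem_span_singleton.mp this
        exact ⟨c, fun hc => hx0 (by simp [hc]), rfl⟩
      · rintro ⟨c, hc, rfl⟩
        have hcv : c • v ≠ 0 := smul_ne_zero hc hv0
        refine ⟨⟨?_, hcv⟩, ?_⟩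
        · have : v ∈ Submodule.span K {v} := Submodule.mem_span_singleton_self v
          exact Submodule.smul_mem _ _ (hP.2 this)
        · rw [Submodule.span_singleton_smul_eq (IsUnit.mk0 c hc) v]
    rw [himg, Finset.card_image_of_injective _ (smul_left_injective K hv0),
      Finset.card_erase_of_mem (Finset.mem_univ _), Finset.card_univ]
  rw [Finset.sum_congr rfl hfiber, Finset.sum_const, smul_eq_mul] at hcount
  have hscard : s.card = Fintype.card K ^ finrank K W - 1 := by
    have h1 : s.card = ((W : Set V) \ {0}).ncard := (Set.ncard_eq_toFinset_card' _).symm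
    rw [h1, Set.ncard_diff_singleton_of_mem (Submodule.zero_mem W)]
    congr 1
    rw [← Nat.card_coe_set_eq]
    haveI : Fintype W := Fintype.ofFinite W
    rw [Nat.card_eq_fintype_card, card_eq_pow_finrank (K := K)]
    rfl
  have htcard : t.card = (pts W).ncard := by
    rw [ht, ← Set.ncard_eq_toFinset_card']
  rw [hscard, htcard] at hcount
  omega

section Symplectic

variable (f : V →ₗ[K] V →ₗ[K] K)

local notation "O" => LinearMap.BilinForm.orthogonal f

lemma mem_orth_iff (S : Submodule K V) (y : V) : y ∈ O S ↔ ∀ x ∈ S, f x y = 0 := Iff.rfl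

lemma le_orth_iff (S T : Submodule K V) : T ≤ O S ↔ ∀ x ∈ S, ∀ y ∈ T, f x y = 0 := by
  constructor
  · intro h x hx y hy
    exact h hy x hx
  · intro h y hy x hx
    exact h x hx y hy

variable (halt : ∀ x, f x x = 0)

include halt in
lemma skew (x y : V) : f y x = - f x y := by
  have h := halt (x + y)
  have hx := halt x
  have hy := halt y
  simp only [map_add, LinearMap.add_apply, hx, hy] at h
  linear_combination h

include halt in
lemma isRefl : (LinearMap.BilinForm.IsRefl f) := by
  intro x y h
  rw [skew f halt]
  simp [h]

include halt in
lemma le_orth_comm {S T : Submodule K V} : S ≤ O T ↔ T ≤ O S := by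
  rw [le_orth_iff, le_orth_iff]
  constructor
  · intro h x hx y hy
    rw [skew f halt]
    simp [h y hy x hx]
  · intro h x hx y hy
    rw [skew f halt]
    simp [h y hy x hx]

include halt in
lemma point_isotropic {P : Submodule K V} (h : finrank K P = 1) : P ≤ O P := by
  obtain ⟨v, hv0, rfl⟩ := gen_of_finrank_one h
  rw [le_orth_iff]
  intro x hx y hy
  obtain ⟨a, rfl⟩ := Submodule.mem_span_singleton.mp hx
  obtain ⟨b, rfl⟩ := Submodule.mem_span_singleton.mp hy
  simp [halt v]

lemma inf_orth_le (S P : Submodule K V) : (O S) ⊓ (O P) ≤ O (S ⊔ P) := by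
  intro y hy
  rw [mem_orth_iff]
  intro x hx
  obtain ⟨s, hs, p, hp, rfl⟩ := Submodule.mem_sup.mp hx
  have h1 : f s y = 0 := hy.1 s hs
  have h2 : f p y = 0 := hy.2 p hp
  simp only [map_add, LinearMap.add_apply, h1, h2, add_zero]

include halt in
lemma sup_point_isotropic {S P : Submodule K V} (hS : S ≤ O S) (hP : finrank K P = 1)
    (hPS : P ≤ O S) : S ⊔ P ≤ O (S ⊔ P) := by
  refine le_trans ?_ (inf_orth_le f S P)
  exact sup_le (le_inf hS ((le_orth_comm f halt).mpr hPS))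
    (le_inf hPS (point_isotropic f halt hP))

variable (hnd : ∀ y, (∀ x, f x y = 0) → y = 0)

include halt hnd in
lemma nondeg : (LinearMap.BilinForm.Nondegenerate f) := by
  refine ⟨fun x hx => hnd x (fun z => by rw [skew f halt]; simp [hx z]), hnd⟩

include halt hnd in
lemma finrank_orth (S : Submodule K V) :
    finrank K (O S) = finrank K V - finrank K S :=
  LinearMap.BilinForm.finrank_orthogonal (nondeg f halt hnd) S

variable {r : ℕ} (hV : finrank K V = 2 * r)

include halt hnd hV in
/-- number of maximal totally isotropic subspaces containing a given t.i. subspace -/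
lemma maximals_count : ∀ (k : ℕ) (S : Submodule K V), S ≤ O S → finrank K S + k = r →
    {W : Submodule K V | W ≤ O W ∧ finrank K W = r ∧ S ≤ W}.ncard
      = ∏ i ∈ Finset.range k, (Fintype.card K ^ (i + 1) + 1) := by
  classical
  haveI : Finite V := Module.finite_of_finite K
  haveI : Fintype V := Fintype.ofFinite V
  haveI : Fintype (Submodule K V) := Fintype.ofFinite _
  have hq2 : 2 ≤ Fintype.card K := Fintype.one_lt_card
  intro k
  induction k with
  | zero =>
    intro S hS hrk
    rw [Nat.add_zero] at hrk
    have : {W : Submodule K V | W ≤ O W ∧ finrank K W = r ∧ S ≤ W} = {S} := by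
      ext W
      simp only [Set.mem_setOf_eq, Set.mem_singleton_iff]
      constructor
      · rintro ⟨-, hWr, hSW⟩
        exact (Submodule.eq_of_le_of_finrank_le hSW (by omega)).symm
      · rintro rfl
        exact ⟨hS, hrk, le_rfl⟩
    rw [this, Set.ncard_singleton, Finset.range_zero, Finset.prod_empty]
  | succ k ih =>
    intro S hS hrk
    set q := Fintype.card K with hq
    set s := finrank K S with hsdef
    -- the collections
    set WW : Set (Submodule K V) := {W | W ≤ O W ∧ finrank K W = r ∧ S ≤ W} with hWW
    set PP : Set (Submodule K V) := pts (O S) \ pts S with hPP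
    set Wf : Finset (Submodule K V) := Set.toFinset WW with hWf
    set Pf : Finset (Submodule K V) := Set.toFinset PP with hPf
    have key := double_count Pf Wf (fun P W => P ≤ W)
    -- left side: each P gives T k maximals
    have hleft : ∀ P ∈ Pf, (Wf.filter (fun W => P ≤ W)).card
        = ∏ i ∈ Finset.range k, (q ^ (i + 1) + 1) := by
      intro P hP
      rw [hPf, Set.mem_toFinset, hPP] at hP
      obtain ⟨⟨hP1, hPO⟩, hPnS⟩ := hP
      have hPnleS : ¬ P ≤ S := fun h => hPnS ⟨hP1, h⟩
      have hSP : S ⊔ P ≤ O (S ⊔ P) := sup_point_isotropic f halt hS hP1 hPO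
      have hrksup : finrank K (S ⊔ P : Submodule K V) = s + 1 := by
        have hinf : finrank K (S ⊓ P : Submodule K V) = 0 := by
          by_contra h
          have h1 : finrank K (S ⊓ P : Submodule K V) ≤ 1 := by
            have := Submodule.finrank_mono (inf_le_right : S ⊓ P ≤ P)
            omega
          have h2 : finrank K (S ⊓ P : Submodule K V) = 1 := by omega
          have : S ⊓ P = P := Submodule.eq_of_le_of_finrank_le inf_le_right (by omega)
          exact hPnleS (this ▸ inf_le_left)
        have := Submodule.finrank_sup_add_finrank_inf_eq S P
        omega
      have hset : (Wf.filter (fun W => P ≤ W) : Finset (Submodule K V))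
          = Set.toFinset {W : Submodule K V | W ≤ O W ∧ finrank K W = r ∧ S ⊔ P ≤ W} := by
        ext W
        simp only [Finset.mem_filter, hWf, Set.mem_toFinset, hWW, Set.mem_setOf_eq, sup_le_iff]
        tauto
      rw [hset, ← Set.ncard_eq_toFinset_card', ih (S ⊔ P) hSP (by omega)]
    -- right side: each W gives (pts W).ncard - (pts S).ncard points
    have hb := card_pts S
    have hright : ∀ W ∈ Wf, (Pf.filter (fun P => P ≤ W)).card * (q - 1) = q ^ r - q ^ s := by
      intro W hW
      rw [hWf, Set.mem_toFinset, hWW] at hW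
      obtain ⟨hWti, hWr, hSW⟩ := hW
      have hset : (Pf.filter (fun P => P ≤ W) : Finset (Submodule K V))
          = Set.toFinset (pts W \ pts S) := by
        ext P
        simp only [Finset.mem_filter, hPf, Set.mem_toFinset]
        simp only [hPP, Set.mem_diff, pts,
          Set.mem_setOf_eq]
        constructor
        · rintro ⟨⟨⟨h1, -⟩, h3⟩, h4⟩
          exact ⟨⟨h1, h4⟩, h3⟩
        · rintro ⟨⟨h1, h2⟩, h3⟩
          refine ⟨⟨⟨h1, ?_⟩, h3⟩, h2⟩
          rw [le_orth_iff]
          intro x hx y hy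
          exact hWti (h2 hy) x (hSW hx)
      have hsub : pts S ⊆ pts W := pts_mono hSW
      have hdiff : (pts W \ pts S).ncard = (pts W).ncard - (pts S).ncard :=
        Set.ncard_diff hsub (pts_finite S)
      have ha := card_pts W
      rw [hWr, ← hq] at ha
      have hb' := hb
      rw [← hsdef, ← hq] at hb'
      rw [hset, ← Set.ncard_eq_toFinset_card', hdiff, Nat.sub_mul, ha, hb']
      have hqr : q ^ s ≤ q ^ r := Nat.pow_le_pow_right (by omega) (by omega)
      have h1 : (1 : ℕ) ≤ q ^ s := Nat.one_le_pow _ _ (by omega)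
      omega
    -- count of PP
    have hPcard : Pf.card * (q - 1) = q ^ (r + (k + 1)) - q ^ s := by
      have hOS : finrank K (O S) = r + (k + 1) := by
        rw [finrank_orth f halt hnd, hV]
        omega
      have hc := card_pts (O S)
      rw [hOS, ← hq] at hc
      have hb' := hb
      rw [← hsdef, ← hq] at hb'
      have hsub : pts S ⊆ pts (O S) := pts_mono hS
      have hdiff : PP.ncard = (pts (O S)).ncard - (pts S).ncard :=
        Set.ncard_diff hsub (pts_finite S)
      have hqr : q ^ s ≤ q ^ (r + (k+1)) := Nat.pow_le_pow_right (by omega) (by omega)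
      have h1 : (1 : ℕ) ≤ q ^ s := Nat.one_le_pow _ _ (by omega)
      have hPfc : Pf.card = PP.ncard := by rw [hPf, ← Set.ncard_eq_toFinset_card']
      rw [hPfc, hdiff, Nat.sub_mul, hc, hb']
      omega
    -- combine
    rw [Finset.sum_congr rfl hleft, Finset.sum_const, smul_eq_mul] at key
    -- key : Pf.card * T k = ∑ W in Wf, count
    have key2 : Pf.card * (∏ i ∈ Finset.range k, (q ^ (i + 1) + 1)) * (q - 1)
        = Wf.card * (q ^ r - q ^ s) := by
      rw [key, Finset.sum_mul]
      rw [Finset.sum_congr rfl hright, Finset.sum_const, smul_eq_mul]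
    have hfact : q ^ (r + (k + 1)) - q ^ s = (q ^ r - q ^ s) * (q ^ (k + 1) + 1) := by
      have h1 : q ^ (r + (k + 1)) = q ^ r * q ^ (k + 1) := pow_add q r (k + 1)
      have h2 : q ^ r = q ^ s * q ^ (k + 1) := by
        rw [← pow_add]
        congr 1
        omega
      have hqs : (1 : ℕ) ≤ q ^ s := Nat.one_le_pow _ _ (by omega)
      have hqk : (1 : ℕ) ≤ q ^ (k + 1) := Nat.one_le_pow _ _ (by omega)
      have hle : q ^ s ≤ q ^ r := Nat.pow_le_pow_right (by omega) (by omega)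
      -- (q^r - q^s)(q^(k+1)+1) = q^r * q^(k+1) + q^r - q^s*q^(k+1) - q^s
      rw [Nat.sub_mul, Nat.mul_add, Nat.mul_add, Nat.mul_one, Nat.mul_one, h1, ← h2]
      omega
    rw [mul_comm (Pf.card) _, mul_assoc, hPcard, hfact] at key2
    -- now cancel (q^r - q^s)
    have hpos : 0 < q ^ r - q ^ s := by
      have : q ^ s < q ^ r := Nat.pow_lt_pow_right (by omega) (by omega)
      omega
    have key3 : (∏ i ∈ Finset.range k, (q ^ (i + 1) + 1)) * (q ^ (k + 1) + 1) = Wf.card := by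
      have := key2
      rw [show (∏ i ∈ Finset.range k, (q ^ (i + 1) + 1)) * ((q ^ r - q ^ s) * (q ^ (k + 1) + 1))
          = (q ^ r - q ^ s) * ((∏ i ∈ Finset.range k, (q ^ (i + 1) + 1)) * (q ^ (k + 1) + 1))
          from by ring, show Wf.card * (q ^ r - q ^ s) = (q ^ r - q ^ s) * Wf.card from by ring]
          at this
      exact Nat.eq_of_mul_eq_mul_left hpos this
    rw [Finset.prod_range_succ, key3, hWf]
    exact Set.ncard_eq_toFinset_card' _

include halt hnd hV in
lemma forward_dir (hr : 2 ≤ r) (M : Set (Submodule K V)) (hM : ∀ P ∈ M, finrank K P = 1)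
    (m : ℕ)
    (hOv : ∀ W : Submodule K V, (∀ x ∈ W, ∀ y ∈ W, f x y = 0) → finrank K W = r →
      {P ∈ M | P ≤ W}.ncard = m) :
    ∀ P : Submodule K V, finrank K P = 1 →
      ((P ∈ M → {Q ∈ M | Q ≤ O P}.ncard
          = m * (Fintype.card K ^ (r - 1) + 1) - Fintype.card K ^ (r - 1)) ∧
       (P ∉ M → {Q ∈ M | Q ≤ O P}.ncard = m * (Fintype.card K ^ (r - 1) + 1))) := by
  classical
  haveI : Finite V := Module.finite_of_finite K
  haveI : Fintype V := Fintype.ofFinite V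
  haveI : Fintype (Submodule K V) := Fintype.ofFinite _
  have hq2 : 2 ≤ Fintype.card K := Fintype.one_lt_card
  set q := Fintype.card K with hq
  intro P hP1
  -- the isotropy translation: TI W ↔ W ≤ O W
  have hTI : ∀ W : Submodule K V, (∀ x ∈ W, ∀ y ∈ W, f x y = 0) ↔ W ≤ O W := by
    intro W
    rw [le_orth_iff]
  set T : ℕ → ℕ := fun k => ∏ i ∈ Finset.range k, (q ^ (i + 1) + 1) with hT
  have hTpos : ∀ k, 0 < T k := by
    intro k
    exact Finset.prod_pos (fun i _ => by positivity)
  have hTsucc : T (r - 1) = T (r - 2) * (q ^ (r - 1) + 1) := by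
    simp only [hT]
    rw [show r - 1 = (r - 2) + 1 by omega, Finset.prod_range_succ,
      show r - 2 + 1 = r - 1 by omega]
  set Mf : Finset (Submodule K V) := Set.toFinset M with hMf
  set A : Set (Submodule K V) := {W | W ≤ O W ∧ finrank K W = r ∧ P ≤ W} with hA
  set Af : Finset (Submodule K V) := Set.toFinset A with hAf
  have hAcard : Af.card = T (r - 1) := by
    rw [hAf, ← Set.ncard_eq_toFinset_card', hA,
      maximals_count f halt hnd hV (r - 1) P (point_isotropic f halt hP1) (by omega)]
  have key := double_count Mf Af (fun Q W => Q ≤ W)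
  -- right side: each maximal contains m points of M
  have hright : ∀ W ∈ Af, (Mf.filter (fun Q => Q ≤ W)).card = m := by
    intro W hW
    rw [hAf, Set.mem_toFinset, hA] at hW
    have hset : Mf.filter (fun Q => Q ≤ W) = Set.toFinset {Q ∈ M | Q ≤ W} := by
      ext Q
      simp [hMf, Set.mem_toFinset]
    rw [hset, ← Set.ncard_eq_toFinset_card']
    exact hOv W ((hTI W).mpr hW.1) hW.2.1
  -- left side: evaluate per point of M
  have hleft : ∀ Q ∈ Mf, Q ≠ P → Q ≤ O P → (Af.filter (fun W => Q ≤ W)).card = T (r - 2) := by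
    intro Q hQ hQP hQO
    rw [hMf, Set.mem_toFinset] at hQ
    have hQ1 : finrank K Q = 1 := hM Q hQ
    have hQnP : ¬ Q ≤ P := by
      intro h
      exact hQP (Submodule.eq_of_le_of_finrank_le h (by omega))
    have hsup : P ⊔ Q ≤ O (P ⊔ Q) := sup_point_isotropic f halt (point_isotropic f halt hP1) hQ1 hQO
    have hrk2 : finrank K (P ⊔ Q : Submodule K V) = 2 := by
      have hinf : finrank K (P ⊓ Q : Submodule K V) = 0 := by
        by_contra h
        have h1 : finrank K (P ⊓ Q : Submodule K V) ≤ 1 := by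
          have := Submodule.finrank_mono (inf_le_right : P ⊓ Q ≤ Q)
          omega
        have : P ⊓ Q = Q := Submodule.eq_of_le_of_finrank_le inf_le_right (by omega)
        exact hQnP (this ▸ inf_le_left)
      have := Submodule.finrank_sup_add_finrank_inf_eq P Q
      omega
    have hset : Af.filter (fun W => Q ≤ W)
        = Set.toFinset {W : Submodule K V | W ≤ O W ∧ finrank K W = r ∧ P ⊔ Q ≤ W} := by
      ext W
      simp only [Finset.mem_filter, hAf, Set.mem_toFinset, hA, Set.mem_setOf_eq, sup_le_iff]
      tauto
    rw [hset, ← Set.ncard_eq_toFinset_card',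
      maximals_count f halt hnd hV (r - 2) (P ⊔ Q) hsup (by omega)]
  have hzero : ∀ Q ∈ Mf, ¬ Q ≤ O P → (Af.filter (fun W => Q ≤ W)).card = 0 := by
    intro Q hQ hQO
    rw [Finset.card_eq_zero, Finset.filter_eq_empty_iff]
    intro W hW
    rw [hAf, Set.mem_toFinset, hA] at hW
    intro hQW
    apply hQO
    rw [le_orth_iff]
    intro x hx y hy
    exact hW.1 (hQW hy) x (hW.2.2 hx)
  have hself : P ∈ Mf → (Af.filter (fun W => P ≤ W)).card = T (r - 1) := by
    intro _
    have : Af.filter (fun W => P ≤ W) = Af := by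
      apply Finset.filter_true_of_mem
      intro W hW
      rw [hAf, Set.mem_toFinset, hA] at hW
      exact hW.2.2
    rw [this, hAcard]
  -- the count of M ∩ P^⊥
  set s' : Finset (Submodule K V) := Mf.filter (fun Q => Q ≤ O P) with hs'
  have hcval : s'.card = {Q ∈ M | Q ≤ O P}.ncard := by
    rw [Set.ncard_eq_toFinset_card']
    congr 1
    ext Q
    simp [hs', hMf]
  -- reduce the sum over Mf to a sum over s'
  have hsum : ∑ Q ∈ Mf, (Af.filter (fun W => Q ≤ W)).card
      = ∑ Q ∈ s', (Af.filter (fun W => Q ≤ W)).card := by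
    rw [hs']
    refine (Finset.sum_subset (Finset.filter_subset _ _) ?_).symm
    intro Q hQ hQn
    rw [Finset.mem_filter] at hQn
    push_neg at hQn
    exact hzero Q hQ (hQn hQ)
  rw [Finset.sum_congr rfl hright, Finset.sum_const, smul_eq_mul, hsum] at key
  -- key : ∑ Q in s', card = Af.card * m
  constructor
  · -- P ∈ M
    intro hPM
    have hPs' : P ∈ s' := by
      rw [hs', Finset.mem_filter, hMf, Set.mem_toFinset]
      exact ⟨hPM, point_isotropic f halt hP1⟩
    have hsplit : ∑ Q ∈ s', (Af.filter (fun W => Q ≤ W)).card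
        = T (r - 1) + (s'.card - 1) * T (r - 2) := by
      rw [← Finset.sum_erase_add _ _ hPs', hself (by rw [hs'] at hPs'; exact Finset.mem_filter.mp hPs' |>.1)]
      have : ∀ Q ∈ s'.erase P, (Af.filter (fun W => Q ≤ W)).card = T (r - 2) := by
        intro Q hQ
        rw [Finset.mem_erase] at hQ
        rw [hs', Finset.mem_filter] at hQ
        exact hleft Q hQ.2.1 hQ.1 hQ.2.2
      rw [Finset.sum_congr rfl this, Finset.sum_const, smul_eq_mul,
        Finset.card_erase_of_mem hPs']
      ring
    rw [hsplit, hAcard] at key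
    have hc1 : 1 ≤ s'.card := Finset.card_pos.mpr ⟨P, hPs'⟩
    rw [hTsucc] at key
    have key2 : T (r - 2) * ((q ^ (r - 1) + 1) + (s'.card - 1))
        = T (r - 2) * ((q ^ (r - 1) + 1) * m) := by
      rw [Nat.mul_add, ← mul_assoc, ← key]
      ring
    have key3 := Nat.eq_of_mul_eq_mul_left (hTpos (r - 2)) key2
    rw [← hcval]
    rw [show m * (q ^ (r - 1) + 1) = (q ^ (r - 1) + 1) * m from mul_comm _ _]
    omega
  · -- P ∉ M
    intro hPM
    have hsplit : ∑ Q ∈ s', (Af.filter (fun W => Q ≤ W)).card = s'.card * T (r - 2) := by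
      rw [Finset.sum_congr rfl (fun Q hQ => ?_), Finset.sum_const, smul_eq_mul]
      rw [hs', Finset.mem_filter] at hQ
      have hQM : Q ∈ M := by rw [hMf, Set.mem_toFinset] at hQ; exact hQ.1
      refine hleft Q hQ.1 (fun h => hPM (h ▸ hQM)) hQ.2
    rw [hsplit, hAcard, hTsucc] at key
    rw [← hcval]
    have key3 : T (r - 2) * s'.card = T (r - 2) * (m * (q ^ (r - 1) + 1)) := by
      rw [mul_comm (T (r - 2)) s'.card, key]
      ring
    exact Nat.eq_of_mul_eq_mul_left (hTpos (r - 2)) key3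

include halt hnd hV in
lemma backward_dir (hr : 2 ≤ r) (M : Set (Submodule K V)) (hM : ∀ P ∈ M, finrank K P = 1)
    (m : ℕ)
    (hH : ∀ P : Submodule K V, finrank K P = 1 →
      ((P ∈ M → {Q ∈ M | Q ≤ O P}.ncard
          = m * (Fintype.card K ^ (r - 1) + 1) - Fintype.card K ^ (r - 1)) ∧
       (P ∉ M → {Q ∈ M | Q ≤ O P}.ncard = m * (Fintype.card K ^ (r - 1) + 1)))) :
    ∀ W : Submodule K V, (∀ x ∈ W, ∀ y ∈ W, f x y = 0) → finrank K W = r →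
      {P ∈ M | P ≤ W}.ncard = m := by
  classical
  haveI : Finite V := Module.finite_of_finite K
  haveI : Fintype V := Fintype.ofFinite V
  haveI : Fintype (Submodule K V) := Fintype.ofFinite _
  have hq2 : 2 ≤ Fintype.card K := Fintype.one_lt_card
  set q := Fintype.card K with hq
  -- the case m = 0 : M must be empty
  rcases Nat.eq_zero_or_pos m with hm0 | hm
  · have hMe : M = ∅ := by
      by_contra h
      obtain ⟨P, hPM⟩ := Set.nonempty_iff_ne_empty.mpr h
      have hP1 := hM P hPM
      have h0 := (hH P hP1).1 hPM
      rw [hm0] at h0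
      simp only [Nat.zero_mul, Nat.zero_sub] at h0
      have hmem : P ∈ {Q ∈ M | Q ≤ O P} := ⟨hPM, point_isotropic f halt hP1⟩
      have hpos : 0 < {Q ∈ M | Q ≤ O P}.ncard :=
        (Set.ncard_pos (Set.toFinite _)).mpr ⟨P, hmem⟩
      omega
    intro W _ _
    rw [hm0]
    have : {P | P ∈ M ∧ P ≤ W} = ∅ := by
      ext P
      simp [hMe]
    rw [this, Set.ncard_empty]
  -- main case : m ≥ 1
  have hE1 : 1 ≤ q ^ (r - 1) := Nat.one_le_pow _ _ (by omega)
  have hub : q ^ (r - 1) + 1 ≤ m * (q ^ (r - 1) + 1) := Nat.le_mul_of_pos_left _ hm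
  set E := q ^ (r - 1) with hE
  have hc : ∀ P : Submodule K V, finrank K P = 1 →
      {Q ∈ M | Q ≤ O P}.ncard + (if P ∈ M then E else 0) = m * (E + 1) := by
    intro P h1
    by_cases hPM : P ∈ M
    · rw [if_pos hPM, (hH P h1).1 hPM]
      omega
    · rw [if_neg hPM, (hH P h1).2 hPM]
      omega
  set Mf : Finset (Submodule K V) := Set.toFinset M with hMf
  set N := Mf.card with hN
  have hNcard : N = M.ncard := by rw [hN, hMf, ← Set.ncard_eq_toFinset_card']
  have hfilterM : ∀ P : Submodule K V,
      (Mf.filter (fun Q => Q ≤ O P)).card = {Q ∈ M | Q ≤ O P}.ncard := by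
    intro P
    rw [Set.ncard_eq_toFinset_card']
    congr 1
    ext Q
    simp [hMf]
  have hptf : ∀ U : Submodule K V,
      (Set.toFinset (pts U)).card * (q - 1) = q ^ finrank K U - 1 := by
    intro U
    rw [← Set.ncard_eq_toFinset_card']
    exact card_pts U
  -- generic evaluation of the left-hand sums
  have hLHS : ∀ U : Submodule K V,
      (∑ P ∈ Set.toFinset (pts U), (Mf.filter (fun Q => Q ≤ O P)).card)
        + ((Set.toFinset (pts U)).filter (fun P => P ∈ M)).card * E
      = (Set.toFinset (pts U)).card * (m * (E + 1)) := by
    intro U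
    have h1 : ∀ P ∈ Set.toFinset (pts U),
        (Mf.filter (fun Q => Q ≤ O P)).card + (if P ∈ M then E else 0) = m * (E + 1) := by
      intro P hP
      rw [Set.mem_toFinset] at hP
      rw [hfilterM]
      exact hc P hP.1
    have h2 := Finset.sum_congr rfl h1
    rw [Finset.sum_add_distrib, Finset.sum_const, smul_eq_mul] at h2
    rw [← h2]
    congr 1
    rw [← Finset.sum_filter]
    rw [Finset.sum_const, smul_eq_mul]
  -- Step A : the total size of M
  have hMtotal : N = m * (E * q + 1) := by
    have dc1 := double_count (Set.toFinset (pts (⊤ : Submodule K V))) Mf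
      (fun P Q => Q ≤ O P)
    have hfilt : (Set.toFinset (pts (⊤ : Submodule K V))).filter (fun P => P ∈ M) = Mf := by
      ext P
      simp only [Finset.mem_filter, Set.mem_toFinset, hMf]
      simp only [pts, Set.mem_setOf_eq]
      exact ⟨fun h => h.2, fun h => ⟨⟨hM P h, le_top⟩, h⟩⟩
    have hA := hLHS ⊤
    rw [hfilt] at hA
    -- right side : each Q ∈ M sees pts of a hyperplane
    have hQside : ∀ Q ∈ Mf,
        ((Set.toFinset (pts (⊤ : Submodule K V))).filter (fun P => Q ≤ O P)).card * (q - 1)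
          = q ^ (2 * r - 1) - 1 := by
      intro Q hQ
      rw [hMf, Set.mem_toFinset] at hQ
      have hset : (Set.toFinset (pts (⊤ : Submodule K V))).filter (fun P => Q ≤ O P)
          = Set.toFinset (pts (O Q)) := by
        ext P
        constructor
        · intro hP
          rw [Finset.mem_filter, Set.mem_toFinset] at hP
          rw [Set.mem_toFinset]
          exact ⟨hP.1.1, (le_orth_comm f halt).mp hP.2⟩
        · intro hP
          rw [Set.mem_toFinset] at hP
          rw [Finset.mem_filter, Set.mem_toFinset]
          exact ⟨⟨hP.1, le_top⟩, (le_orth_comm f halt).mpr hP.2⟩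
      rw [hset, hptf, finrank_orth f halt hnd, hV, hM Q hQ]
    -- assemble the (q-1)-scaled identity
    have hn : (Set.toFinset (pts (⊤ : Submodule K V))).card * (q - 1) = q ^ (2 * r) - 1 := by
      rw [hptf, finrank_top, hV]
    have keyN : N * (q ^ (2 * r - 1) - 1) + N * E * (q - 1)
        = (q ^ (2 * r) - 1) * (m * (E + 1)) := by
      have e1 : (∑ P ∈ Set.toFinset (pts (⊤ : Submodule K V)),
          (Mf.filter (fun Q => Q ≤ O P)).card) * (q - 1)
          = N * (q ^ (2 * r - 1) - 1) := by
        rw [dc1, Finset.sum_mul, Finset.sum_congr rfl hQside, Finset.sum_const, smul_eq_mul]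
      have e2 := congrArg (· * (q - 1)) hA
      rw [Nat.add_mul, e1,
        mul_right_comm ((Set.toFinset (pts (⊤ : Submodule K V))).card) (m * (E + 1)) (q - 1),
        hn] at e2
      rw [← hN] at e2
      rw [← e2]
    -- now the integer algebra
    have p1 : q ^ (2 * r) = E * E * q * q := by
      rw [show 2 * r = ((r - 1) + (r - 1)) + (1 + 1) by omega, pow_add, pow_add, pow_add,
        pow_one, hE]
      ring
    have p2 : q ^ (2 * r - 1) = E * E * q := by
      rw [show 2 * r - 1 = ((r - 1) + (r - 1)) + 1 by omega, pow_add, pow_add, pow_one, hE]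
    rw [p1, p2] at keyN
    have h1 : (1 : ℕ) ≤ E * E * q := by nlinarith
    have h1' : (1 : ℕ) ≤ E * E * q * q := by nlinarith
    have keyZ : (N : ℤ) * ((E : ℤ) * E * q - 1) + N * E * (q - 1)
        = ((E : ℤ) * E * q * q - 1) * (m * (E + 1)) := by
      zify [h1, h1', show (1:ℕ) ≤ q by omega] at keyN
      linear_combination keyN
    have hcpos : (0 : ℤ) < ((E : ℤ) + 1) * ((E : ℤ) * q - 1) := by
      have hE1' : (1 : ℤ) ≤ (E : ℤ) := by exact_mod_cast hE1
      have hq2' : (2 : ℤ) ≤ (q : ℤ) := by exact_mod_cast hq2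
      nlinarith
    have : ((E : ℤ) + 1) * ((E : ℤ) * q - 1) * (N : ℤ)
        = ((E : ℤ) + 1) * ((E : ℤ) * q - 1) * ((m : ℤ) * ((E : ℤ) * q + 1)) := by
      linear_combination keyZ
    have hNz : (N : ℤ) = (m : ℤ) * ((E : ℤ) * q + 1) := by
      exact mul_left_cancel₀ (ne_of_gt hcpos) this
    exact_mod_cast hNz
  -- Step B : fix a maximal W
  intro W hWti hWr
  have hWle : W ≤ O W := (le_orth_iff f W W).mpr hWti
  set x := (Mf.filter (fun Q => Q ≤ W)).card with hx
  have hxval : x = {P ∈ M | P ≤ W}.ncard := by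
    rw [hx, Set.ncard_eq_toFinset_card']
    congr 1
    ext Q
    simp [hMf]
  have hxN : x ≤ N := Finset.card_filter_le _ _
  have dc2 := double_count (Set.toFinset (pts W)) Mf (fun P Q => Q ≤ O P)
  have hfiltW : (Set.toFinset (pts W)).filter (fun P => P ∈ M) = Mf.filter (fun Q => Q ≤ W) := by
    ext P
    simp only [Finset.mem_filter, Set.mem_toFinset, hMf]
    simp only [pts, Set.mem_setOf_eq]
    exact ⟨fun h => ⟨h.2, h.1.2⟩, fun h => ⟨⟨hM P h.1, h.2⟩, h.1⟩⟩
  have hB := hLHS W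
  rw [hfiltW, ← hx] at hB
  -- right side evaluation
  have hQside : ∀ Q ∈ Mf,
      ((Set.toFinset (pts W)).filter (fun P => Q ≤ O P)).card * (q - 1)
        = if Q ≤ W then q ^ r - 1 else q ^ (r - 1) - 1 := by
    intro Q hQ
    rw [hMf, Set.mem_toFinset] at hQ
    have hQ1 : finrank K Q = 1 := hM Q hQ
    have hset : (Set.toFinset (pts W)).filter (fun P => Q ≤ O P)
        = Set.toFinset (pts (W ⊓ O Q)) := by
      ext P
      simp only [Finset.mem_filter, Set.mem_toFinset]
      simp only [pts, Set.mem_setOf_eq, le_inf_iff]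
      constructor
      · rintro ⟨⟨h1, h2⟩, h3⟩
        exact ⟨h1, h2, (le_orth_comm f halt).mp h3⟩
      · rintro ⟨h1, h2, h3⟩
        exact ⟨⟨h1, h2⟩, (le_orth_comm f halt).mpr h3⟩
    rw [hset, hptf]
    by_cases hQW : Q ≤ W
    · rw [if_pos hQW]
      have hWOQ : W ≤ O Q := by
        rw [le_orth_iff]
        intro a ha y hy
        exact hWti a (hQW ha) y hy
      rw [inf_eq_left.mpr hWOQ, hWr]
    · rw [if_neg hQW]
      congr 2
      -- finrank (W ⊓ O Q) = r - 1
      have hOQrk : finrank K (O Q) = 2 * r - 1 := by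
        rw [finrank_orth f halt hnd, hV, hQ1]
      have hWOW : W = O W := by
        have hOWrk : finrank K (O W) = r := by
          rw [finrank_orth f halt hnd, hV, hWr]
          omega
        exact (Submodule.eq_of_le_of_finrank_le hWle (by omega))
      have hnWOQ : ¬ W ≤ O Q := by
        intro h
        have : Q ≤ O W := (le_orth_comm f halt).mpr h
        rw [← hWOW] at this
        exact hQW this
      have hlt : O Q < W ⊔ O Q := by
        refine lt_of_le_of_ne le_sup_right (fun h => hnWOQ ?_)
        rw [h]
        exact le_sup_left
      have hsuprk : finrank K (W ⊔ O Q : Submodule K V) = 2 * r := by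
        have h1 := Submodule.finrank_lt_finrank_of_lt hlt
        have h2 : finrank K (W ⊔ O Q : Submodule K V) ≤ finrank K V :=
          Submodule.finrank_le _
        omega
      have := Submodule.finrank_sup_add_finrank_inf_eq W (O Q)
      rw [hsuprk, hWr, hOQrk] at this
      omega
  -- assemble
  have hsplitc := Finset.card_filter_add_card_filter_not (s := Mf)
      (p := fun Q => Q ≤ W)
  have e1 : (∑ P ∈ Set.toFinset (pts W), (Mf.filter (fun Q => Q ≤ O P)).card) * (q - 1)
      = x * (q ^ r - 1) + (N - x) * (q ^ (r - 1) - 1) := by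
    rw [dc2, Finset.sum_mul, Finset.sum_congr rfl hQside, Finset.sum_ite,
      Finset.sum_const, Finset.sum_const, smul_eq_mul, smul_eq_mul, ← hx]
    have hneg : (Mf.filter (fun Q => ¬ Q ≤ W)).card = N - x := by omega
    rw [hneg]
  have e2 := congrArg (· * (q - 1)) hB
  rw [Nat.add_mul, e1] at e2
  have hptW : (Set.toFinset (pts W)).card * (q - 1) = q ^ r - 1 := by
    rw [hptf, hWr]
  rw [mul_right_comm ((Set.toFinset (pts W)).card) (m * (E + 1)) (q - 1), hptW] at e2
  -- e2 : x(q^r-1) + (N-x)(q^(r-1)-1) + x E (q-1) = m(E+1) (q^r-1)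
  have p3 : q ^ r = E * q := by
    rw [show r = (r - 1) + 1 by omega, pow_add, pow_one, hE]
  rw [p3, hMtotal, ← hE] at e2
  have h1 : (1 : ℕ) ≤ E * q := by nlinarith
  have keyZ : (x : ℤ) * ((E : ℤ) * q - 1) + ((m : ℤ) * ((E : ℤ) * q + 1) - x) * ((E : ℤ) - 1)
      + (x : ℤ) * E * (q - 1) = (m : ℤ) * ((E : ℤ) + 1) * ((E : ℤ) * q - 1) := by
    have hxM : x ≤ m * (E * q + 1) := hMtotal ▸ hxN
    zify [h1, hE1, show (1:ℕ) ≤ q by omega, hxM] at e2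
    linear_combination e2
  have hcpos : (0 : ℤ) < 2 * (E : ℤ) * ((q : ℤ) - 1) := by
    have hE1' : (1 : ℤ) ≤ (E : ℤ) := by exact_mod_cast hE1
    have hq2' : (2 : ℤ) ≤ (q : ℤ) := by exact_mod_cast hq2
    nlinarith
  have hfin : (2 * (E : ℤ) * ((q : ℤ) - 1)) * (x : ℤ)
      = (2 * (E : ℤ) * ((q : ℤ) - 1)) * (m : ℤ) := by
    linear_combination keyZ
  have : (x : ℤ) = (m : ℤ) := mul_left_cancel₀ (ne_of_gt hcpos) hfin
  rw [← hxval]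
  exact_mod_cast this

end Symplectic

end Aux

/-- Let `V` be a `2r`-dimensional symplectic space over `F_{p^e}` (a non-degenerate
alternating bilinear form `f` on `V`), giving the polar space `W(2r-1,p^e)`, and let
`M` be a set of projective points (`1`-dimensional subspaces). Then `M` is an
`m`-ovoid — i.e. every maximal totally isotropic subspace (of vector dimension `r`)
contains exactly `m` points of `M` — if and only if for every projective point `P`:
`|P^⊥ ∩ M| = m(p^{e(r-1)}+1) - p^{e(r-1)}` when `P ∈ M`, and
`|P^⊥ ∩ M| = m(p^{e(r-1)}+1)` when `P ∉ M`. -/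
theorem statement_7 (p e r : ℕ) (hp : p.Prime) (he : 0 < e) (hr : 2 ≤ r)
    (K : Type*) [Field K] [Fintype K] (hK : Fintype.card K = p ^ e)
    (V : Type*) [AddCommGroup V] [Module K V] [FiniteDimensional K V]
    (hV : finrank K V = 2 * r)
    (f : V →ₗ[K] V →ₗ[K] K)
    (halt : ∀ x, f x x = 0)
    (hnd : ∀ y, (∀ x, f x y = 0) → y = 0)
    (M : Set (Submodule K V)) (hM : ∀ P ∈ M, finrank K P = 1)
    (m : ℕ) :
    (∀ W : Submodule K V, (∀ x ∈ W, ∀ y ∈ W, f x y = 0) → finrank K W = r →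
        {P ∈ M | P ≤ W}.ncard = m)
    ↔ (∀ P : Submodule K V, finrank K P = 1 →
        ((P ∈ M →
            {Q ∈ M | ∀ x ∈ P, ∀ y ∈ Q, f x y = 0}.ncard =
              m * (p ^ (e * (r - 1)) + 1) - p ^ (e * (r - 1))) ∧
         (P ∉ M →
            {Q ∈ M | ∀ x ∈ P, ∀ y ∈ Q, f x y = 0}.ncard =
              m * (p ^ (e * (r - 1)) + 1)))) := by
  classical
  have hθ : p ^ (e * (r - 1)) = Fintype.card K ^ (r - 1) := by
    rw [hK, ← pow_mul]
  have hsetP : ∀ P : Submodule K V, {Q ∈ M | ∀ x ∈ P, ∀ y ∈ Q, f x y = 0}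
      = {Q ∈ M | Q ≤ LinearMap.BilinForm.orthogonal f P} := by
    intro P
    ext Q
    simp only [Set.mem_setOf_eq]
    exact and_congr_right fun _ => (le_orth_iff f P Q).symm
  constructor
  · intro hOv P hP1
    have h := forward_dir f halt hnd hV hr M hM m hOv P hP1
    rw [hsetP P, hθ] at *
    exact h
  · intro hH W hWti hWr
    refine backward_dir f halt hnd hV hr M hM m ?_ W hWti hWr
    intro P hP1
    have h := hH P hP1
    rw [hsetP P, hθ] at h
    exact h
end

section
/- Let p be an odd prime, q = p^{2ℓt} with t even, N = p^ℓ + 1, e a positive integer with 2er = 2ℓt for odd r. Then gcd(N, (q-1)/(p^e-1)) = 2·gcd(N/2, (√q-1)/(p^e-1)). -/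
theorem aux_sq_sub_one (a : ℕ) (h : 1 ≤ a) : a * a - 1 = (a - 1) * (a + 1) := by
  obtain ⟨k, rfl⟩ := Nat.exists_eq_add_of_le h
  rw [Nat.add_sub_cancel_left]
  have : (1 + k) * (1 + k) = k * (1 + k + 1) + 1 := by ring
  omega

/-- Let `p` be an odd prime, `q = p^(2ℓt)` with `t` even, `N = p^ℓ + 1`, and `e` a positive
integer with `2er = 2ℓt` for `r` odd. Then
`gcd(N, (q-1)/(p^e-1)) = 2 * gcd(N/2, (√q-1)/(p^e-1))`, where `√q = p^(ℓt)`. -/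
theorem statement_12 (p ℓ t e r : ℕ) (hp : p.Prime) (hodd : Odd p)
    (he : 0 < e) (hr : Odd r) (hℓ : 0 < ℓ) (ht : Even t) (h0t : 0 < t)
    (hert : e * r = ℓ * t) :
    Nat.gcd (p ^ ℓ + 1) ((p ^ (2 * ℓ * t) - 1) / (p ^ e - 1)) =
      2 * Nat.gcd ((p ^ ℓ + 1) / 2) ((p ^ (ℓ * t) - 1) / (p ^ e - 1)) := by
  have hp2 : 2 ≤ p := hp.two_le
  set m := p ^ (ℓ * t) with hm
  set s := ∑ i ∈ Finset.range r, (p ^ e) ^ i with hs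
  have hpe1 : 1 ≤ p ^ e := Nat.one_le_pow _ _ (by omega)
  have hd : 0 < p ^ e - 1 := by
    have : 2 ≤ p ^ e := by
      calc 2 ≤ p := hp2
      _ = p ^ 1 := (pow_one p).symm
      _ ≤ p ^ e := Nat.pow_le_pow_right (by omega) he
    omega
  have hm1 : 1 ≤ m := Nat.one_le_pow _ _ (by omega)
  -- geometric sum identity
  have key1 : (p ^ e - 1) * s = m - 1 := by
    have hcast : ((p : ℤ) ^ e - 1) * (s : ℤ) = (m : ℤ) - 1 := by
      rw [hs, hm]
      push_cast
      rw [mul_comm, geom_sum_mul, ← pow_mul, hert]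
    have : (((p ^ e - 1) * s : ℕ) : ℤ) = ((m - 1 : ℕ) : ℤ) := by
      rw [Nat.cast_mul, Nat.cast_sub hpe1, Nat.cast_sub hm1]
      push_cast
      push_cast at hcast
      linarith [hcast]
    exact_mod_cast this
  have hA : (m - 1) / (p ^ e - 1) = s := by
    rw [← key1, Nat.mul_div_cancel_left _ hd]
  -- q - 1 factorization
  have hq : p ^ (2 * ℓ * t) - 1 = (p ^ e - 1) * (s * (m + 1)) := by
    have h2 : p ^ (2 * ℓ * t) = m * m := by
      rw [hm, ← pow_add]; congr 1; ring
    rw [h2, ← mul_assoc, key1]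
    exact aux_sq_sub_one m hm1
  have hB : (p ^ (2 * ℓ * t) - 1) / (p ^ e - 1) = s * (m + 1) := by
    rw [hq, Nat.mul_div_cancel_left _ hd]
  -- N divides m - 1
  have hNdvd : p ^ ℓ + 1 ∣ m - 1 := by
    obtain ⟨u, hu⟩ := ht
    have h1 : p ^ ℓ + 1 ∣ (p ^ ℓ) ^ 2 - 1 ^ 2 := by
      have heq : (p ^ ℓ) ^ 2 - 1 ^ 2 = (p ^ ℓ - 1) * (p ^ ℓ + 1) := by
        have h1 : 1 ≤ p ^ ℓ := Nat.one_le_pow _ _ (by omega)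
        rw [pow_two, one_pow]
        exact aux_sq_sub_one _ h1
      rw [heq]; exact Dvd.intro_left _ rfl
    have h2 : (p ^ ℓ) ^ 2 - 1 ^ 2 ∣ ((p ^ ℓ) ^ 2) ^ u - (1 ^ 2) ^ u :=
      Nat.sub_dvd_pow_sub_pow _ _ _
    have h3 : ((p ^ ℓ) ^ 2) ^ u = m := by
      rw [hm, ← pow_mul, ← pow_mul]; subst hu; congr 1; ring
    rw [h3, one_pow, one_pow] at h2
    exact h1.trans h2
  obtain ⟨c, hc⟩ := hNdvd
  -- main reduction
  have hmain : Nat.gcd (p ^ ℓ + 1) (s * (m + 1)) = Nat.gcd (p ^ ℓ + 1) (2 * s) := by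
    have hsplit : s * (m + 1) = 2 * s + c * s * (p ^ ℓ + 1) := by
      have h4 : s * (m + 1) = 2 * s + (m - 1) * s := by
        obtain ⟨k, hk⟩ := Nat.exists_eq_add_of_le hm1
        rw [hk, Nat.add_sub_cancel_left]
        have : s * (1 + k + 1) = 2 * s + k * s := by ring
        omega
      rw [h4, hc]; ring
    rw [hsplit, Nat.gcd_add_mul_right_right]
  -- N is even
  have hNeven : p ^ ℓ + 1 = 2 * ((p ^ ℓ + 1) / 2) := by
    have : p ^ ℓ % 2 = 1 := Nat.odd_iff.mp hodd.pow
    omega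
  rw [hB, hA, hmain]
  conv_lhs => rw [hNeven]
  rw [Nat.gcd_mul_left]
end

section
/- Let p₀ be an odd prime, p an odd prime, t even with p₀ ∤ t, ℓ = ℓ₀p₀, e = ℓ₀t, q = p^{2ℓt}, N = p^ℓ+1. Then d₀ = gcd(N/2, (√q-1)/(p^e-1)) > 1. -/
private lemma aux_dvd_pow_sub_one_gcd {d p m n : ℕ} (hd : 0 < d) (hp : 0 < p)
    (hm : d ∣ p ^ m - 1) (hn : d ∣ p ^ n - 1) : d ∣ p ^ Nat.gcd m n - 1 := by
  haveI : NeZero d := ⟨hd.ne'⟩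
  have key : ∀ k : ℕ, d ∣ p ^ k - 1 ↔ (p : ZMod d) ^ k = 1 := by
    intro k
    have h1 : (1 : ℕ) ≤ p ^ k := Nat.one_le_pow _ _ hp
    rw [← ZMod.natCast_eq_zero_iff, Nat.cast_sub h1]
    push_cast
    rw [sub_eq_zero]
  rw [key] at hm hn ⊢
  exact pow_gcd_eq_one.mpr ⟨hm, hn⟩

/-- Case (B): `r = p₀` an odd prime not dividing `t`, `t` even, `ℓ = ℓ₀ p₀`, `e = ℓ₀ t`,
`q = p^(2ℓt)`, `N = p^ℓ + 1`, `√q = p^(ℓt)`. Then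
`d₀ = gcd(N/2, (√q-1)/(p^e-1)) > 1`. -/
theorem statement_17 (p p₀ ℓ ℓ₀ t e : ℕ) (hp : p.Prime) (hpodd : Odd p)
    (hp₀ : p₀.Prime) (hp₀odd : Odd p₀) (ht : Even t) (h0t : 0 < t) (hndvd : ¬ p₀ ∣ t)
    (hℓ₀ : 0 < ℓ₀) (hℓ : ℓ = ℓ₀ * p₀) (he : e = ℓ₀ * t) :
    1 < Nat.gcd ((p ^ ℓ + 1) / 2) ((p ^ (ℓ * t) - 1) / (p ^ e - 1)) := by
  have hpne2 : p ≠ 2 := by rintro rfl; exact (by decide : ¬ Odd 2) hpodd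
  have hp₀ne2 : p₀ ≠ 2 := by rintro rfl; exact (by decide : ¬ Odd 2) hp₀odd
  have hp3 : 3 ≤ p := by have := hp.two_le; omega
  have hp₀3 : 3 ≤ p₀ := by have := hp₀.two_le; omega
  have hp1 : 1 < p := by omega
  have hℓpos : 0 < ℓ := by rw [hℓ]; exact Nat.mul_pos hℓ₀ hp₀.pos
  -- generic: a ∣ b → p^a - 1 ∣ p^b - 1
  have pow_sub_dvd : ∀ a b : ℕ, a ∣ b → p ^ a - 1 ∣ p ^ b - 1 := by
    rintro a b ⟨c, rfl⟩
    simpa only [one_pow, pow_mul] using Nat.sub_dvd_pow_sub_pow (p ^ a) 1 c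
  set N2 : ℕ := (p ^ ℓ + 1) / 2 with hN2def
  set A : ℕ := p ^ e - 1 with hAdef
  set M : ℕ := (p ^ (ℓ * t) - 1) / A with hMdef
  -- N even
  have hNeven : 2 ∣ p ^ ℓ + 1 := by
    obtain ⟨k, hk⟩ := hpodd.pow (n := ℓ)
    omega
  have hplℓ : p ≤ p ^ ℓ := Nat.le_self_pow hℓpos.ne' p
  have hN2pos : 0 < N2 := Nat.div_pos (by omega) (by norm_num)
  -- e ∣ ℓ * t
  have hedvd : e ∣ ℓ * t := ⟨p₀, by rw [he, hℓ]; ring⟩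
  have hAdvd : A ∣ p ^ (ℓ * t) - 1 := pow_sub_dvd e (ℓ * t) hedvd
  have hAM : A * M = p ^ (ℓ * t) - 1 := Nat.mul_div_cancel' hAdvd
  -- N ∣ p^(2ℓ) - 1
  have hNdvd2l : p ^ ℓ + 1 ∣ p ^ (2 * ℓ) - 1 := by
    have h1 : 1 ≤ p ^ ℓ := Nat.one_le_pow _ _ hp.pos
    have h2 : 1 ≤ p ^ (2 * ℓ) := Nat.one_le_pow _ _ hp.pos
    have key : p ^ (2 * ℓ) - 1 = (p ^ ℓ + 1) * (p ^ ℓ - 1) := by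
      zify [h1, h2]
      rw [two_mul, pow_add]; ring
    rw [key]; exact Dvd.intro _ rfl
  have h2ldvd : 2 * ℓ ∣ ℓ * t := by
    obtain ⟨s, rfl⟩ := ht
    exact ⟨s, by ring⟩
  have hN2dvdlt : N2 ∣ p ^ (ℓ * t) - 1 :=
    dvd_trans (dvd_trans (Nat.div_dvd_of_dvd hNeven) hNdvd2l) (pow_sub_dvd _ _ h2ldvd)
  by_contra hcon
  push_neg at hcon
  have hgcdpos : 0 < Nat.gcd N2 M := Nat.gcd_pos_of_pos_left _ hN2pos
  have hcop : Nat.Coprime N2 M := by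
    unfold Nat.Coprime; omega
  -- N2 ∣ A
  have hN2A : N2 ∣ A := by
    have : N2 ∣ A * M := by rw [hAM]; exact hN2dvdlt
    exact (Nat.Coprime.dvd_of_dvd_mul_right hcop) this
  have hN2e : N2 ∣ p ^ e - 1 := hN2A
  have hN22l : N2 ∣ p ^ (2 * ℓ) - 1 :=
    dvd_trans (Nat.div_dvd_of_dvd hNeven) hNdvd2l
  -- gcd of exponents
  have hgcdexp : Nat.gcd e (2 * ℓ) = 2 * ℓ₀ := by
    have hcop2 : Nat.Coprime p₀ t := (Nat.Prime.coprime_iff_not_dvd hp₀).mpr hndvd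
    have h2 : Nat.gcd t (2 * p₀) = 2 := by
      rw [Nat.Coprime.gcd_mul_right_cancel_right 2 hcop2, Nat.gcd_comm,
        Nat.gcd_eq_left ht.two_dvd]
    rw [he, hℓ, show 2 * (ℓ₀ * p₀) = ℓ₀ * (2 * p₀) from by ring, Nat.gcd_mul_left, h2]
    ring
  have hkey : N2 ∣ p ^ (2 * ℓ₀) - 1 := by
    have := aux_dvd_pow_sub_one_gcd hN2pos hp.pos hN2e hN22l
    rwa [hgcdexp] at this
  -- size contradiction
  have h1X : 1 < p ^ (2 * ℓ₀) := Nat.one_lt_pow (by omega) hp1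
  have hle : N2 ≤ p ^ (2 * ℓ₀) - 1 := Nat.le_of_dvd (by omega) hkey
  have hbig : 3 * p ^ (2 * ℓ₀) ≤ p ^ ℓ := by
    have h1 : 3 * ℓ₀ ≤ ℓ := by rw [hℓ]; nlinarith
    calc 3 * p ^ (2 * ℓ₀) ≤ p ^ ℓ₀ * p ^ (2 * ℓ₀) := by
          have : 3 ≤ p ^ ℓ₀ := le_trans hp3 (Nat.le_self_pow hℓ₀.ne' p)
          exact Nat.mul_le_mul_right _ this
      _ = p ^ (3 * ℓ₀) := by rw [← pow_add]; ring_nf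
      _ ≤ p ^ ℓ := Nat.pow_le_pow_right hp.pos h1
  have hN : N2 * 2 = p ^ ℓ + 1 := Nat.div_mul_cancel hNeven
  omega
end

section
/- For p = 3, p₀ = 5, t = 2, ℓ = 5ℓ₀, e = 2ℓ₀: setting d₀ = gcd((3^{5ℓ₀}+1)/2, (3^{10ℓ₀}-1)/(3^{2ℓ₀}-1)), the quantity (3^{5ℓ₀}+1)/(3^{ℓ₀}+1) divides d₀, and consequently for fixed b, the ratio m/p^{e(p₀-2)} with m = b(√q-1)/(d₀(p^e-1)) satisfies m/p^{e(p₀-2)} ≤ b(3^{4ℓ₀}+3^{3ℓ₀}+3^{2ℓ₀}+3^{ℓ₀}+1)/3^{6ℓ₀}, which tends to 0 as ℓ₀ → ∞. -/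
open Filter

/-- `d₀ = gcd((3^{5ℓ₀}+1)/2, (3^{10ℓ₀}-1)/(3^{2ℓ₀}-1))` for `p = 3`, `p₀ = 5`, `t = 2`,
`ℓ = 5ℓ₀`, `e = 2ℓ₀`. -/
noncomputable def dZero (ℓ₀ : ℕ) : ℕ :=
  Nat.gcd ((3 ^ (5 * ℓ₀) + 1) / 2) ((3 ^ (10 * ℓ₀) - 1) / (3 ^ (2 * ℓ₀) - 1))

/-- The ratio `m / p^{e(p₀-2)}` where `m = b(√q-1)/(d₀(p^e-1))`, `√q = 3^{10ℓ₀}`,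
`p^e = 3^{2ℓ₀}`, `p^{e(p₀-2)} = 3^{6ℓ₀}`. -/
noncomputable def mRatio (b ℓ₀ : ℕ) : ℝ :=
  ((b : ℝ) * ((3 : ℝ) ^ (10 * ℓ₀) - 1) / ((dZero ℓ₀ : ℝ) * ((3 : ℝ) ^ (2 * ℓ₀) - 1))) /
    (3 : ℝ) ^ (6 * ℓ₀)

/-- quotient (x^5+1)/(x+1) with x = 3^ℓ, as a natural number -/
def Qn (ℓ : ℕ) : ℕ := 3 ^ (4 * ℓ) + 3 ^ (2 * ℓ) + 1 - (3 ^ (3 * ℓ) + 3 ^ ℓ)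

lemma hle (ℓ : ℕ) : 3 ^ (3 * ℓ) + 3 ^ ℓ ≤ 3 ^ (4 * ℓ) + 3 ^ (2 * ℓ) + 1 := by
  have h1 : 3 ^ (3 * ℓ) ≤ 3 ^ (4 * ℓ) := Nat.pow_le_pow_right (by norm_num) (by omega)
  have h2 : 3 ^ ℓ ≤ 3 ^ (2 * ℓ) := Nat.pow_le_pow_right (by norm_num) (by omega)
  omega

lemma Qid (ℓ : ℕ) : 3 ^ (5 * ℓ) + 1 = (3 ^ ℓ + 1) * Qn ℓ := by
  have := hle ℓ
  have : ((3 ^ (5 * ℓ) + 1 : ℕ) : ℤ) = (((3 ^ ℓ + 1) * Qn ℓ : ℕ) : ℤ) := by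
    push_cast [Qn, this]
    have e : ∀ k : ℕ, ((3:ℤ)) ^ (k * ℓ) = ((3:ℤ) ^ ℓ) ^ k := fun k => by
      rw [mul_comm, pow_mul]
    simp only [e]; ring
  exact_mod_cast this

lemma Sid (ℓ : ℕ) (hℓ : 0 < ℓ) :
    3 ^ (10 * ℓ) - 1 = (3 ^ (2 * ℓ) - 1) * (Qn ℓ * (3 ^ (4*ℓ) + 3 ^ (3*ℓ) + 3 ^ (2*ℓ) + 3 ^ ℓ + 1)) := by
  have h1 : (1:ℕ) ≤ 3 ^ (10 * ℓ) := Nat.one_le_pow _ _ (by norm_num)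
  have h2 : (1:ℕ) ≤ 3 ^ (2 * ℓ) := Nat.one_le_pow _ _ (by norm_num)
  have := hle ℓ
  have key : ((3 ^ (10 * ℓ) - 1 : ℕ) : ℤ) = (((3 ^ (2 * ℓ) - 1) * (Qn ℓ * (3 ^ (4*ℓ) + 3 ^ (3*ℓ) + 3 ^ (2*ℓ) + 3 ^ ℓ + 1)) : ℕ) : ℤ) := by
    push_cast [Qn, this, h1, h2]
    have e : ∀ k : ℕ, ((3:ℤ)) ^ (k * ℓ) = ((3:ℤ) ^ ℓ) ^ k := fun k => by
      rw [mul_comm, pow_mul]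
    simp only [e]; ring
  exact_mod_cast key

lemma Qn_dvd_dZero (ℓ : ℕ) (hℓ : 0 < ℓ) : Qn ℓ ∣ dZero ℓ := by
  apply Nat.dvd_gcd
  · -- Qn ∣ (3^(5ℓ)+1)/2
    have hodd : Odd (3 ^ ℓ : ℕ) := Odd.pow ⟨1, by norm_num⟩
    obtain ⟨k, hk⟩ := hodd
    have : (3 ^ (5 * ℓ) + 1) / 2 = (k + 1) * Qn ℓ := by
      rw [Qid ℓ, hk]
      rw [show (2 * k + 1 + 1) * Qn ℓ = 2 * ((k + 1) * Qn ℓ) by ring]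
      exact Nat.mul_div_cancel_left _ (by norm_num)
    rw [this]; exact dvd_mul_left _ _
  · have h2 : (0:ℕ) < 3 ^ (2 * ℓ) - 1 := by
      have : (3:ℕ) ^ 1 ≤ 3 ^ (2 * ℓ) := Nat.pow_le_pow_right (by norm_num) (by omega)
      omega
    have : (3 ^ (10 * ℓ) - 1) / (3 ^ (2 * ℓ) - 1) = Qn ℓ * (3 ^ (4*ℓ) + 3 ^ (3*ℓ) + 3 ^ (2*ℓ) + 3 ^ ℓ + 1) := by
      rw [Sid ℓ hℓ, Nat.mul_div_cancel_left _ h2]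
    rw [this]; exact dvd_mul_right _ _

lemma quot_eq (ℓ : ℕ) : (3 ^ (5 * ℓ) + 1) / (3 ^ ℓ + 1) = Qn ℓ := by
  rw [Qid ℓ, Nat.mul_div_cancel_left _ (by positivity)]

lemma dZero_pos (ℓ : ℕ) : 0 < dZero ℓ := by
  apply Nat.gcd_pos_of_pos_left
  have : (2:ℕ) ≤ 3 ^ (5 * ℓ) + 1 := by
    have : (1:ℕ) ≤ 3 ^ (5 * ℓ) := Nat.one_le_pow _ _ (by norm_num)
    omega
  omega

lemma Qn_pos (ℓ : ℕ) : 0 < Qn ℓ := by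
  by_contra h
  have h0 : Qn ℓ = 0 := Nat.eq_zero_of_le_zero (le_of_not_gt h)
  have := Qid ℓ
  rw [h0, mul_zero] at this
  simp at this

lemma real_id (ℓ : ℕ) :
    (3:ℝ) ^ (10 * ℓ) - 1 = ((3:ℝ) ^ (2 * ℓ) - 1) *
      ((Qn ℓ : ℝ) * ((3:ℝ) ^ (4*ℓ) + 3 ^ (3*ℓ) + 3 ^ (2*ℓ) + 3 ^ ℓ + 1)) := by
  have hc : (Qn ℓ : ℝ) = (3:ℝ) ^ (4*ℓ) + 3 ^ (2*ℓ) + 1 - ((3:ℝ) ^ (3*ℓ) + 3 ^ ℓ) := by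
    rw [Qn]; push_cast [hle ℓ]; ring
  rw [hc]
  have e : ∀ k : ℕ, ((3:ℝ)) ^ (k * ℓ) = ((3:ℝ) ^ ℓ) ^ k := fun k => by
    rw [mul_comm, pow_mul]
  simp only [e]; ring

lemma mRatio_nonneg (b ℓ : ℕ) : 0 ≤ mRatio b ℓ := by
  unfold mRatio
  have h1 : (1:ℝ) ≤ (3:ℝ) ^ (10 * ℓ) := one_le_pow₀ (by norm_num)
  have h2 : (1:ℝ) ≤ (3:ℝ) ^ (2 * ℓ) := one_le_pow₀ (by norm_num)
  apply div_nonneg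
  · apply div_nonneg
    · apply mul_nonneg (Nat.cast_nonneg _); linarith
    · apply mul_nonneg (Nat.cast_nonneg _); linarith
  · positivity

lemma ratio_le (b ℓ : ℕ) (hℓ : 0 < ℓ) : mRatio b ℓ ≤
    (b : ℝ) * ((3 : ℝ) ^ (4 * ℓ) + 3 ^ (3 * ℓ) + 3 ^ (2 * ℓ) + 3 ^ ℓ + 1) /
      (3 : ℝ) ^ (6 * ℓ) := by
  set S : ℝ := (3:ℝ) ^ (4 * ℓ) + 3 ^ (3 * ℓ) + 3 ^ (2 * ℓ) + 3 ^ ℓ + 1 with hS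
  have hSpos : 0 < S := by positivity
  have hQ : (0:ℝ) < (Qn ℓ : ℝ) := by exact_mod_cast Qn_pos ℓ
  have hd : (Qn ℓ : ℝ) ≤ (dZero ℓ : ℝ) := by
    exact_mod_cast Nat.le_of_dvd (dZero_pos ℓ) (Qn_dvd_dZero ℓ hℓ)
  have h2 : (9:ℝ) ≤ (3:ℝ) ^ (2 * ℓ) := by
    calc (9:ℝ) = 3 ^ (2*1) := by norm_num
    _ ≤ 3 ^ (2 * ℓ) := by
      exact pow_le_pow_right₀ (by norm_num) (by omega)
  have hden : (0:ℝ) < (dZero ℓ : ℝ) * ((3:ℝ) ^ (2 * ℓ) - 1) := by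
    apply mul_pos (by exact_mod_cast dZero_pos ℓ); linarith
  unfold mRatio
  gcongr
  rw [div_le_iff₀ hden, real_id ℓ]
  calc (b:ℝ) * (((3:ℝ) ^ (2 * ℓ) - 1) * ((Qn ℓ : ℝ) * S))
      = ((b:ℝ) * S * ((3:ℝ) ^ (2 * ℓ) - 1)) * (Qn ℓ : ℝ) := by ring
    _ ≤ ((b:ℝ) * S * ((3:ℝ) ^ (2 * ℓ) - 1)) * (dZero ℓ : ℝ) := by
        apply mul_le_mul_of_nonneg_left hd
        have hb0 : (0:ℝ) ≤ (b:ℝ) := Nat.cast_nonneg _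
        exact mul_nonneg (mul_nonneg hb0 hSpos.le) (by linarith)
    _ = (b:ℝ) * S * ((dZero ℓ : ℝ) * ((3:ℝ) ^ (2 * ℓ) - 1)) := by ring

lemma bound_tendsto (b : ℕ) :
    Tendsto (fun ℓ : ℕ =>
      (b : ℝ) * ((3 : ℝ) ^ (4 * ℓ) + 3 ^ (3 * ℓ) + 3 ^ (2 * ℓ) + 3 ^ ℓ + 1) /
        (3 : ℝ) ^ (6 * ℓ)) atTop (nhds 0) := by
  apply tendsto_of_tendsto_of_tendsto_of_le_of_le (g := fun _ => (0:ℝ))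
    (h := fun ℓ : ℕ => 5 * (b:ℝ) * (1/9 : ℝ) ^ ℓ)
  · exact tendsto_const_nhds
  · have : Tendsto (fun ℓ : ℕ => (1/9 : ℝ) ^ ℓ) atTop (nhds 0) :=
      tendsto_pow_atTop_nhds_zero_of_lt_one (by norm_num) (by norm_num)
    have := this.const_mul (5 * (b:ℝ))
    simpa using this
  · intro ℓ; positivity
  · intro ℓ
    have e : ∀ k : ℕ, ((3:ℝ)) ^ (k * ℓ) = ((3:ℝ) ^ ℓ) ^ k := fun k => by
      rw [mul_comm, pow_mul]
    have hX : (1:ℝ) ≤ (3:ℝ) ^ ℓ := one_le_pow₀ (by norm_num)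
    simp only [e]
    set X := (3:ℝ) ^ ℓ with hXdef
    have hXpos : (0:ℝ) < X := by positivity
    have h19 : (1/9:ℝ) ^ ℓ = X ^ 4 / X ^ 6 := by
      have h9 : (9:ℝ) ^ ℓ = X ^ 2 := by
        rw [hXdef, show (9:ℝ) = 3 ^ 2 by norm_num, ← pow_mul, ← pow_mul, mul_comm]
      rw [div_pow, one_pow, h9]
      field_simp
    have hsum : X ^ 4 + X ^ 3 + X ^ 2 + X + 1 ≤ 5 * X ^ 4 := by
      have h1 : X ^ 1 ≤ X ^ 4 := pow_le_pow_right₀ hX (by norm_num)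
      have h2 : X ^ 2 ≤ X ^ 4 := pow_le_pow_right₀ hX (by norm_num)
      have h3 : X ^ 3 ≤ X ^ 4 := pow_le_pow_right₀ hX (by norm_num)
      have h0 : (1:ℝ) ≤ X ^ 4 := one_le_pow₀ hX
      simp only [pow_one] at h1
      linarith
    rw [h19, show 5 * (b:ℝ) * (X ^ 4 / X ^ 6) = 5 * (b:ℝ) * X ^ 4 / X ^ 6 by ring]
    apply div_le_div_of_nonneg_right ?_ (by positivity)
    calc (b:ℝ) * (X ^ 4 + X ^ 3 + X ^ 2 + X + 1) ≤ (b:ℝ) * (5 * X ^ 4) :=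
          mul_le_mul_of_nonneg_left hsum (Nat.cast_nonneg _)
      _ = 5 * (b:ℝ) * X ^ 4 := by ring

/-- For `p = 3`, `r = p₀ = 5`, `t = 2`: the quantity `(3^{5ℓ₀}+1)/(3^{ℓ₀}+1)` divides `d₀`;
consequently, for fixed `b`, the ratio `m/3^{6ℓ₀}` with `m = b(√q-1)/(d₀(3^{2ℓ₀}-1))`
is at most `b(3^{4ℓ₀}+3^{3ℓ₀}+3^{2ℓ₀}+3^{ℓ₀}+1)/3^{6ℓ₀}`, which tends to `0`
as `ℓ₀ → ∞`. -/
theorem statement_19 (b : ℕ) (hb : 0 < b) :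
    (∀ ℓ₀ : ℕ, 0 < ℓ₀ → (3 ^ (5 * ℓ₀) + 1) / (3 ^ ℓ₀ + 1) ∣ dZero ℓ₀) ∧
    (∀ ℓ₀ : ℕ, 0 < ℓ₀ → mRatio b ℓ₀ ≤
      (b : ℝ) * ((3 : ℝ) ^ (4 * ℓ₀) + 3 ^ (3 * ℓ₀) + 3 ^ (2 * ℓ₀) + 3 ^ ℓ₀ + 1) /
        (3 : ℝ) ^ (6 * ℓ₀)) ∧
    Tendsto (fun ℓ₀ : ℕ => mRatio b ℓ₀) atTop (nhds 0) ∧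
    Tendsto (fun ℓ₀ : ℕ =>
      (b : ℝ) * ((3 : ℝ) ^ (4 * ℓ₀) + 3 ^ (3 * ℓ₀) + 3 ^ (2 * ℓ₀) + 3 ^ ℓ₀ + 1) /
        (3 : ℝ) ^ (6 * ℓ₀)) atTop (nhds 0) := by
  refine ⟨?_, ?_, ?_, ?_⟩
  · intro ℓ hℓ
    rw [quot_eq]
    exact Qn_dvd_dZero ℓ hℓ
  · intro ℓ hℓ
    exact ratio_le b ℓ hℓ
  · apply tendsto_of_tendsto_of_tendsto_of_le_of_le' tendsto_const_nhds (bound_tendsto b)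
    · exact Eventually.of_forall fun ℓ => mRatio_nonneg b ℓ
    · filter_upwards [eventually_ge_atTop 1] with ℓ hℓ
      exact ratio_le b ℓ hℓ
  · exact bound_tendsto b
end
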